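/- arXiv:1611.04720 — 3 statements merged into one kernel-verified Lean document; each statement's English description precedes it below -/
import Mathlib

section
/- Let μ be a probability law on ℝ satisfying Assumption (A) with constants γ ≥ 1, C₁, C₂ ∈ (0,∞). Then there exist constants C₁', C₂' ∈ (0,∞) such that for every m ∈ ℕ, every differentiable convex function f : ℝ^m → ℝ, every a ∈ ℝ and all t, c ∈ (0,∞): P(f(η) < a − t) · P(f(η) > a and |∇f(η)| ≤ c) ≤ C₁' exp(−(t/c)^γ / C₂'), where η = (η₁,…,η_m) are i.i.d. random variables with law μ and |∇f(η)| denotes the Euclidean norm of the gradient of f at η. -/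
open MeasureTheory

noncomputable section

/-- Assumption (A): concentration inequality for convex `1`-Lipschitz (Euclidean norm)
functions of i.i.d. random variables with marginal law `μ`. -/
def AssumptionA (μ : Measure ℝ) (γ C₁ C₂ : ℝ) : Prop :=
  ∀ n : ℕ, ∀ f : (Fin n → ℝ) → ℝ, ConvexOn ℝ Set.univ f →
    (∀ x y : Fin n → ℝ, |f x - f y| ≤ Real.sqrt (∑ i, (x i - y i) ^ 2)) →
    ∀ t : ℝ, 0 < t →
      (Measure.pi fun _ : Fin n => μ)
          {x | t ≤ |f x - ∫ y, f y ∂(Measure.pi fun _ : Fin n => μ)|}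
        ≤ ENNReal.ofReal (C₁ * Real.exp (-C₂ * t ^ γ))

open Metric Set in
lemma myConvexOn_infDist {E : Type*} [NormedAddCommGroup E] [NormedSpace ℝ E]
    {s : Set E} (hne : s.Nonempty) (hs : Convex ℝ s) :
    ConvexOn ℝ Set.univ (fun x => Metric.infDist x s) := by
  refine ⟨convex_univ, fun x _ y _ p q hp hq hpq => ?_⟩
  by_contra hcon
  push_neg at hcon
  rw [smul_eq_mul, smul_eq_mul] at hcon
  set ε : ℝ := (infDist (p • x + q • y) s - (p * infDist x s + q * infDist y s)) / 2 with hε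
  have hεpos : 0 < ε := by simp only [hε]; linarith
  obtain ⟨u, hu, hxu⟩ := (Metric.infDist_lt_iff hne).mp
    (lt_add_of_pos_right (infDist x s) hεpos)
  obtain ⟨v, hv, hyv⟩ := (Metric.infDist_lt_iff hne).mp
    (lt_add_of_pos_right (infDist y s) hεpos)
  have hm : p • u + q • v ∈ s := hs hu hv hp hq hpq
  have key : infDist (p • x + q • y) s ≤ p * dist x u + q * dist y v := by
    refine (Metric.infDist_le_dist_of_mem hm).trans ?_
    rw [dist_eq_norm, dist_eq_norm, dist_eq_norm]
    have h1 : p • x + q • y - (p • u + q • v) = p • (x - u) + q • (y - v) := by module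
    rw [h1]
    calc ‖p • (x - u) + q • (y - v)‖ ≤ ‖p • (x - u)‖ + ‖q • (y - v)‖ := norm_add_le _ _
      _ = p * ‖x - u‖ + q * ‖y - v‖ := by
          rw [norm_smul, norm_smul, Real.norm_eq_abs, Real.norm_eq_abs,
            abs_of_nonneg hp, abs_of_nonneg hq]
  have h2 : p * dist x u + q * dist y v ≤
      p * (infDist x s + ε) + q * (infDist y s + ε) :=
    add_le_add (mul_le_mul_of_nonneg_left hxu.le hp)
      (mul_le_mul_of_nonneg_left hyv.le hq)
  have h3 : p * (infDist x s + ε) + q * (infDist y s + ε)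
      = p * infDist x s + q * infDist y s + ε := by
    have : p * ε + q * ε = ε := by rw [← add_mul, hpq, one_mul]
    ring_nf
    nlinarith [this]
  simp only [hε] at h3
  nlinarith [key, h2, h3]

lemma myGrad_ineq {E : Type*} [NormedAddCommGroup E] [NormedSpace ℝ E]
    {f : E → ℝ} (hc : ConvexOn ℝ Set.univ f) {x : E} (hd : DifferentiableAt ℝ f x)
    (y : E) : f x + fderiv ℝ f x (y - x) ≤ f y := by
  set g : ℝ → ℝ := fun s => f (x + s • (y - x)) with hg
  have hgc : ConvexOn ℝ Set.univ g := by
    have h := hc.comp_affineMap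
      (AffineMap.const ℝ ℝ x + LinearMap.toAffineMap (LinearMap.smulRight (LinearMap.id) (y - x)))
    simpa [Function.comp_def, hg] using h
  have hderiv : HasDerivAt g (fderiv ℝ f x (y - x)) 0 := by
    have h1 : HasDerivAt (fun s : ℝ => x + s • (y - x)) (y - x) 0 := by
      simpa using ((hasDerivAt_id (0 : ℝ)).smul_const (y - x)).const_add x
    have hx0 : x + (0 : ℝ) • (y - x) = x := by simp
    have hfd : HasFDerivAt f (fderiv ℝ f x) (x + (0 : ℝ) • (y - x)) := by
      rw [hx0]; exact hd.hasFDerivAt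
    have h2 := hfd.comp_hasDerivAt (0 : ℝ) h1
    exact h2
  have hslope := hgc.le_slope_of_hasDerivAt (Set.mem_univ (0 : ℝ)) (Set.mem_univ (1 : ℝ))
    one_pos hderiv
  have h0 : g 0 = f x := by simp [hg]
  have h1 : g 1 = f y := by simp [hg]
  rw [slope_def_field] at hslope
  simp [h0, h1] at hslope
  rw [map_sub]
  linarith

lemma myCS {m : ℕ} (L : (Fin m → ℝ) →L[ℝ] ℝ) (v : Fin m → ℝ) :
    L v ≤ Real.sqrt (∑ i, (L (Pi.single i 1)) ^ 2) * Real.sqrt (∑ i, (v i) ^ 2) := by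
  have hv : v = ∑ i, Pi.single i (v i) := (Finset.univ_sum_single v).symm
  have hLv : L v = ∑ i, v i * L (Pi.single i 1) := by
    conv_lhs => rw [hv]
    rw [map_sum]
    refine Finset.sum_congr rfl fun i _ => ?_
    have hsingle : (Pi.single i (v i) : Fin m → ℝ) = v i • (Pi.single i (1 : ℝ) : Fin m → ℝ) := by
      ext j
      by_cases h : j = i
      · subst h; simp
      · simp [Pi.single_apply, h]
    rw [hsingle, L.map_smul]; simp
  rw [hLv]
  set g : Fin m → ℝ := fun i => L (Pi.single i 1) with hgdef
  have hCS := Finset.sum_mul_sq_le_sq_mul_sq Finset.univ v g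
  calc ∑ i, v i * g i ≤ |∑ i, v i * g i| := le_abs_self _
    _ = Real.sqrt ((∑ i, v i * g i) ^ 2) := (Real.sqrt_sq_eq_abs _).symm
    _ ≤ Real.sqrt ((∑ i, (v i) ^ 2) * ∑ i, (g i) ^ 2) := Real.sqrt_le_sqrt hCS
    _ = Real.sqrt (∑ i, (v i) ^ 2) * Real.sqrt (∑ i, (g i) ^ 2) :=
        Real.sqrt_mul (Finset.sum_nonneg fun i _ => sq_nonneg _) _
    _ = _ := mul_comm _ _

/-- under Assumption (A), a two-sided concentration bound for differentiable
convex functions of i.i.d. random variables, in terms of the Euclidean norm of the gradient. -/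
theorem concentration_of_convex_functions
    (μ : Measure ℝ) [IsProbabilityMeasure μ]
    (γ C₁ C₂ : ℝ) (hγ : 1 ≤ γ) (hC₁ : 0 < C₁) (hC₂ : 0 < C₂)
    (hA : AssumptionA μ γ C₁ C₂) :
    ∃ C₁' C₂' : ℝ, 0 < C₁' ∧ 0 < C₂' ∧
      ∀ m : ℕ, ∀ f : (Fin m → ℝ) → ℝ, Differentiable ℝ f → ConvexOn ℝ Set.univ f →
        ∀ a t c : ℝ, 0 < t → 0 < c →
          (Measure.pi fun _ : Fin m => μ) {x | f x < a - t} *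
            (Measure.pi fun _ : Fin m => μ)
              {x | a < f x ∧
                Real.sqrt (∑ i, (fderiv ℝ f x (Pi.single i 1)) ^ 2) ≤ c}
          ≤ ENNReal.ofReal (C₁' * Real.exp (-((t / c) ^ γ) / C₂')) := by
  refine ⟨C₁, 2 ^ γ / C₂, hC₁, div_pos (Real.rpow_pos_of_pos two_pos γ) hC₂, ?_⟩
  intro m f hdiff hconv a t c ht hc
  set π : Measure (Fin m → ℝ) := Measure.pi fun _ : Fin m => μ with hπ
  by_cases hB : {x : Fin m → ℝ | f x < a - t}.Nonempty
  swap
  · rw [Set.not_nonempty_iff_eq_empty] at hB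
    rw [hB, measure_empty, zero_mul]
    exact zero_le
  set r : ℝ := t / c with hr
  have hrpos : 0 < r := div_pos ht hc
  set ι : (Fin m → ℝ) → EuclideanSpace ℝ (Fin m) :=
    ⇑(WithLp.equiv 2 (Fin m → ℝ)).symm with hι
  set B : Set (Fin m → ℝ) := {x : Fin m → ℝ | f x < a - t} with hBdef
  set T : Set (EuclideanSpace ℝ (Fin m)) := ι '' B with hT
  have hTne : T.Nonempty := hB.image ι
  have hBconv : Convex ℝ B := by
    have h := hconv.convex_lt (a - t)
    simpa using h
  have hTconv : Convex ℝ T :=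
    hBconv.linear_image (WithLp.linearEquiv 2 ℝ (Fin m → ℝ)).symm.toLinearMap
  set h : (Fin m → ℝ) → ℝ := fun x => Metric.infDist (ι x) T with hh
  have hdist_eq : ∀ x y : Fin m → ℝ,
      dist (ι x) (ι y) = Real.sqrt (∑ i, (x i - y i) ^ 2) := by
    intro x y
    rw [EuclideanSpace.dist_eq]
    congr 1
    refine Finset.sum_congr rfl fun i _ => ?_
    rw [Real.dist_eq, sq_abs]
    rfl
  have hconvh : ConvexOn ℝ Set.univ h := by
    have base := myConvexOn_infDist hTne hTconv
    have := base.comp_affineMap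
      (LinearMap.toAffineMap (WithLp.linearEquiv 2 ℝ (Fin m → ℝ)).symm.toLinearMap)
    simpa [Function.comp_def, hh, hι] using this
  have hLip : ∀ x y : Fin m → ℝ, |h x - h y| ≤ Real.sqrt (∑ i, (x i - y i) ^ 2) := by
    intro x y
    have := (Metric.lipschitz_infDist_pt T).dist_le_mul (ι x) (ι y)
    rw [Real.dist_eq] at this
    simpa [hdist_eq x y] using this
  have hzero : ∀ x ∈ B, h x = 0 := fun x hx =>
    Metric.infDist_zero_of_mem (Set.mem_image_of_mem ι hx)
  have hge : ∀ x : Fin m → ℝ, a < f x →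
      Real.sqrt (∑ i, (fderiv ℝ f x (Pi.single i 1)) ^ 2) ≤ c → r ≤ h x := by
    intro x hx1 hx2
    by_contra hcon
    push_neg at hcon
    obtain ⟨z, hz, hdz⟩ := (Metric.infDist_lt_iff hTne).mp hcon
    obtain ⟨y, hy, rfl⟩ := hz
    have hgrad := myGrad_ineq hconv (hdiff x) y
    have hkey : t < fderiv ℝ f x (x - y) := by
      have h1 : fderiv ℝ f x (x - y) = -(fderiv ℝ f x (y - x)) := by
        rw [← map_neg]; congr 1; abel
      rw [h1]
      have : f y < a - t := hy
      linarith
    have hcs := myCS (fderiv ℝ f x) (x - y)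
    have hcs' : fderiv ℝ f x (x - y) ≤ c * Real.sqrt (∑ i, (x i - y i) ^ 2) := by
      refine hcs.trans ?_
      have hsum : (∑ i, ((x - y) i) ^ 2) = ∑ i, (x i - y i) ^ 2 := by
        refine Finset.sum_congr rfl fun i _ => by simp [Pi.sub_apply]
      rw [hsum]
      exact mul_le_mul_of_nonneg_right hx2 (Real.sqrt_nonneg _)
    have hdlt : Real.sqrt (∑ i, (x i - y i) ^ 2) < r := by
      rw [← hdist_eq x y]; exact hdz
    have : c * Real.sqrt (∑ i, (x i - y i) ^ 2) < c * r :=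
      mul_lt_mul_of_pos_left hdlt hc
    rw [hr, mul_div_cancel₀ t hc.ne'] at this
    linarith
  set M : ℝ := ∫ x, h x ∂π with hM
  have hAapp := hA m h hconvh hLip (r / 2) (by positivity)
  rw [← hπ, ← hM] at hAapp
  have h2γ : (0:ℝ) < 2 ^ γ := Real.rpow_pos_of_pos two_pos γ
  have hbound_eq : C₁ * Real.exp (-C₂ * (r / 2) ^ γ)
      = C₁ * Real.exp (-(r ^ γ) / (2 ^ γ / C₂)) := by
    congr 2
    rw [Real.div_rpow hrpos.le (by norm_num : (0:ℝ) ≤ 2)]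
    field_simp
  rw [hbound_eq] at hAapp
  rcases le_or_gt M (r / 2) with hMle | hMgt
  · have hsub : {x : Fin m → ℝ | a < f x ∧
        Real.sqrt (∑ i, (fderiv ℝ f x (Pi.single i 1)) ^ 2) ≤ c}
        ⊆ {x | r / 2 ≤ |h x - M|} := by
      intro x hx
      have hrx := hge x hx.1 hx.2
      have : r / 2 ≤ h x - M := by linarith
      exact this.trans (le_abs_self _)
    calc π B * π {x : Fin m → ℝ | a < f x ∧
          Real.sqrt (∑ i, (fderiv ℝ f x (Pi.single i 1)) ^ 2) ≤ c}
        ≤ 1 * π {x | r / 2 ≤ |h x - M|} := mul_le_mul' prob_le_one (measure_mono hsub)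
      _ = π {x | r / 2 ≤ |h x - M|} := one_mul _
      _ ≤ ENNReal.ofReal (C₁ * Real.exp (-(r ^ γ) / (2 ^ γ / C₂))) := hAapp
  · have hsub : B ⊆ {x | r / 2 ≤ |h x - M|} := by
      intro x hx
      have h0 := hzero x hx
      rw [Set.mem_setOf_eq, h0, zero_sub, abs_neg]
      exact hMgt.le.trans (le_abs_self M)
    calc π B * π {x : Fin m → ℝ | a < f x ∧
          Real.sqrt (∑ i, (fderiv ℝ f x (Pi.single i 1)) ^ 2) ≤ c}
        ≤ π {x | r / 2 ≤ |h x - M|} * 1 := mul_le_mul' (measure_mono hsub) prob_le_one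
      _ = π {x | r / 2 ≤ |h x - M|} := mul_one _
      _ ≤ ENNReal.ofReal (C₁ * Real.exp (-(r ^ γ) / (2 ^ γ / C₂))) := hAapp


end
end

section
/- Let p_m(x) := P_S(S_m = x) denote the m-step transition probabilities of simple random walk on ℤ started at 0. There exists a constant C < ∞ such that for all integers k ≥ 1, all T > 0 and all n ≥ 1: n^{−k/2} Σ_{1 ≤ i₁ < i₂ < ⋯ < i_k ≤ ⌊Tn⌋} Σ_{(x₁,…,x_k) ∈ ℤ^k} Π_{j=1}^k p_{i_j − i_{j−1}}(x_j − x_{j−1})² ≤ C^k T^{k/2} / Γ(k/2 + 1), where i₀ := 0, x₀ := 0 and Γ is the Gamma function. -/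
noncomputable section

/-- Position at time `k` of the simple random walk on `ℤ` with `m` steps encoded by `σ`. -/
def walkPos (m : ℕ) (σ : Fin m → Bool) (k : ℕ) : ℤ :=
  ∑ i : Fin m, if (i : ℕ) < k then (if σ i then 1 else -1) else 0

/-- `p_m(x) = P_S(S_m = x)`, the `m`-step transition probability of simple random walk
on `ℤ` started at `0`. -/
def srwProb (m : ℕ) (x : ℤ) : ℝ :=
  ((2 : ℝ) ^ m)⁻¹ *
    ((Finset.univ.filter fun σ : Fin m → Bool => walkPos m σ m = x).card : ℝ)

/-- Strictly increasing time tuples `1 ≤ i₁ < ⋯ < i_k ≤ M`. -/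
def incrTimes (k M : ℕ) : Finset (Fin k → ℕ) :=
  (Fintype.piFinset fun _ : Fin k => Finset.Icc 1 M).filter
    fun i => ∀ a b : Fin k, a < b → i a < i b

/-- The previous value `v_{j-1}` of a tuple `v`, with convention `v₀ = v0`. -/
def prevV {α : Type*} {k : ℕ} (v0 : α) (v : Fin k → α) (j : Fin k) : α :=
  if h : (j : ℕ) = 0 then v0
  else v ⟨(j : ℕ) - 1, lt_of_le_of_lt (Nat.sub_le _ 1) j.isLt⟩

open Finset

lemma walkPos_self (m : ℕ) (σ : Fin m → Bool) :
    walkPos m σ m = 2 * ((univ.filter fun i => σ i = true).card : ℤ) - m := by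
  unfold walkPos
  have h1 : ∀ i : Fin m, (if (i : ℕ) < m then (if σ i then (1:ℤ) else -1) else 0)
      = (if σ i then (1:ℤ) else -1) := by
    intro i; rw [if_pos i.isLt]
  rw [Finset.sum_congr rfl (fun i _ => h1 i)]
  have h2 : ∀ i : Fin m, (if σ i then (1:ℤ) else -1) = (if σ i = true then (2:ℤ) else 0) - 1 := by
    intro i; by_cases h : σ i <;> simp [h]
  rw [Finset.sum_congr rfl (fun i _ => h2 i), Finset.sum_sub_distrib]
  simp [Finset.sum_ite, mul_comm]

lemma abs_walkPos_le (m : ℕ) (σ : Fin m → Bool) : |walkPos m σ m| ≤ m := by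
  unfold walkPos
  calc |∑ i : Fin m, if (i : ℕ) < m then (if σ i then (1:ℤ) else -1) else 0|
      ≤ ∑ i : Fin m, |if (i : ℕ) < m then (if σ i then (1:ℤ) else -1) else 0| :=
        Finset.abs_sum_le_sum_abs _ _
    _ ≤ ∑ _i : Fin m, 1 := by
        apply Finset.sum_le_sum; intro i _
        by_cases h : (i:ℕ) < m <;> by_cases h2 : σ i <;> simp [h, h2]
    _ = m := by simp

lemma card_fiber_le (m : ℕ) (x : ℤ) :
    (univ.filter fun σ : Fin m → Bool => walkPos m σ m = x).card ≤ m.choose (m / 2) := by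
  rcases (univ.filter fun σ : Fin m → Bool => walkPos m σ m = x).eq_empty_or_nonempty with h | h
  · simp [h]
  · obtain ⟨σ₀, hσ₀⟩ := h
    rw [mem_filter] at hσ₀
    set t₀ := (univ.filter fun i => σ₀ i = true).card with ht₀
    have key : ∀ σ ∈ (univ.filter fun σ : Fin m → Bool => walkPos m σ m = x),
        (univ.filter fun i => σ i = true).card = t₀ := by
      intro σ hσ
      rw [mem_filter] at hσ
      have := hσ.2.trans hσ₀.2.symm
      rw [walkPos_self, walkPos_self] at this
      omega
    calc (univ.filter fun σ : Fin m → Bool => walkPos m σ m = x).card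
        ≤ (powersetCard t₀ (univ : Finset (Fin m))).card := by
          apply Finset.card_le_card_of_injOn (fun σ => univ.filter fun i => σ i = true)
          · intro σ hσ
            rw [Finset.mem_coe, Finset.mem_powersetCard]
            exact ⟨Finset.filter_subset _ _, key σ hσ⟩
          · intro σ hσ σ' hσ' hee
            simp only [Finset.ext_iff] at hee
            funext i
            simpa using hee i
      _ = m.choose t₀ := by rw [Finset.card_powersetCard, card_univ, Fintype.card_fin]
      _ ≤ m.choose (m / 2) := Nat.choose_le_middle _ _

lemma centralBinom_le (m : ℕ) :
    (Nat.centralBinom m : ℝ) ≤ 4 ^ m / Real.sqrt (m + 1) := by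
  induction m with
  | zero => simp [Nat.centralBinom]
  | succ n ih =>
    have hrec := Nat.succ_mul_centralBinom_succ n
    have hrecR : ((n:ℝ) + 1) * (Nat.centralBinom (n+1) : ℝ)
        = 2 * (2 * n + 1) * Nat.centralBinom n := by exact_mod_cast hrec
    have hn1 : (0:ℝ) < (n:ℝ) + 1 := by positivity
    have hcb : (Nat.centralBinom (n+1) : ℝ) = 2 * (2 * n + 1) * Nat.centralBinom n / ((n:ℝ)+1) := by
      field_simp at hrecR ⊢; linarith
    have hcast : ((n+1 : ℕ) : ℝ) + 1 = (n:ℝ) + 2 := by push_cast; ring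
    rw [hcb, hcast]
    rw [div_le_div_iff₀ hn1 (by positivity)]
    have hs1 : (0:ℝ) < Real.sqrt ((n:ℝ)+1) := by positivity
    have hsq : (2*(n:ℝ)+1) * Real.sqrt ((n:ℝ)+2) ≤ 2 * ((n:ℝ)+1) * Real.sqrt ((n:ℝ)+1) := by
      have h1 : (2*(n:ℝ)+1) * Real.sqrt ((n:ℝ)+2)
          = Real.sqrt ((2*(n:ℝ)+1)^2 * ((n:ℝ)+2)) := by
        rw [Real.sqrt_mul (by positivity), Real.sqrt_sq (by positivity)]
      have h2 : 2 * ((n:ℝ)+1) * Real.sqrt ((n:ℝ)+1)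
          = Real.sqrt ((2*((n:ℝ)+1))^2 * ((n:ℝ)+1)) := by
        rw [Real.sqrt_mul (by positivity), Real.sqrt_sq (by positivity)]
      rw [h1, h2]
      apply Real.sqrt_le_sqrt; nlinarith [sq_nonneg ((n:ℝ))]
    have ihs : (Nat.centralBinom n : ℝ) * Real.sqrt ((n:ℝ)+1) ≤ 4^n := by
      rw [← le_div_iff₀ hs1]; exact ih
    calc 2 * (2 * (n:ℝ) + 1) * (Nat.centralBinom n : ℝ) * Real.sqrt ((n:ℝ)+2)
        = (Nat.centralBinom n : ℝ) * ((2*(n:ℝ)+1) * Real.sqrt ((n:ℝ)+2)) * 2 := by ring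
      _ ≤ (Nat.centralBinom n : ℝ) * (2 * ((n:ℝ)+1) * Real.sqrt ((n:ℝ)+1)) * 2 := by
          have := mul_le_mul_of_nonneg_left hsq (by positivity : (0:ℝ) ≤ (Nat.centralBinom n : ℝ))
          linarith
      _ = ((Nat.centralBinom n : ℝ) * Real.sqrt ((n:ℝ)+1)) * (4 * ((n:ℝ)+1)) := by ring
      _ ≤ 4^n * (4 * ((n:ℝ)+1)) := by
          apply mul_le_mul_of_nonneg_right ihs (by positivity)
      _ = 4 ^ (n+1) * ((n:ℝ)+1) := by ring

lemma choose_middle_le (m : ℕ) (hm : 1 ≤ m) :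
    (m.choose (m / 2) : ℝ) ≤ 2 ^ m * Real.sqrt 2 / Real.sqrt m := by
  have hmpos : (0:ℝ) < Real.sqrt m := Real.sqrt_pos.mpr (by exact_mod_cast hm)
  rcases Nat.even_or_odd m with ⟨t, ht⟩ | ⟨t, ht⟩
  · -- m = 2t
    subst ht
    have h2t : (t + t) / 2 = t := by omega
    rw [h2t]
    have hc : (Nat.choose (t+t) t : ℝ) = Nat.centralBinom t := by
      rw [Nat.centralBinom]; norm_num [two_mul]
    rw [hc]
    refine (centralBinom_le t).trans ?_
    rw [div_le_div_iff₀ (by positivity) (by positivity)]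
    have h4 : (4:ℝ)^t = 2^(t+t) := by rw [show (4:ℝ) = 2^2 from by norm_num, ← pow_mul]; ring_nf
    rw [h4]
    have hs : Real.sqrt ((t:ℝ)+(t:ℝ)) ≤ Real.sqrt 2 * Real.sqrt ((t:ℝ)+1) := by
      rw [← Real.sqrt_mul (by norm_num)]
      apply Real.sqrt_le_sqrt; push_cast; nlinarith
    calc (2:ℝ)^(t+t) * Real.sqrt ((t:ℕ)+(t:ℕ) : ℕ) ≤ 2^(t+t) * (Real.sqrt 2 * Real.sqrt ((t:ℝ)+1)) := by
          apply mul_le_mul_of_nonneg_left ?_ (by positivity)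
          push_cast
          exact hs
      _ = 2^(t+t) * Real.sqrt 2 * Real.sqrt ((t:ℝ)+1) := by ring
  · -- m = 2t+1
    subst ht
    have h2t : (2*t + 1) / 2 = t := by omega
    rw [h2t]
    have hps : Nat.choose (2*t+1) t ≤ 2 * Nat.centralBinom t := by
      rcases Nat.eq_zero_or_pos t with h0 | hpos
      · subst h0; simp [Nat.centralBinom]
      · obtain ⟨s, rfl⟩ : ∃ s, t = s + 1 := ⟨t-1, by omega⟩
        have hsucc := Nat.choose_succ_succ' (2*s+2) s
        have he1 : 2*(s+1)+1 = (2*s+2)+1 := by ring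
        have he2 : Nat.centralBinom (s+1) = Nat.choose (2*s+2) (s+1) := by
          rw [Nat.centralBinom, show 2*(s+1) = 2*s+2 from by ring]
        rw [he1, hsucc, he2]
        have hle : Nat.choose (2*s+2) s ≤ Nat.choose (2*s+2) (s+1) := by
          have := Nat.choose_le_middle s (2*s+2)
          have h2 : (2*s+2)/2 = s+1 := by omega
          rwa [h2] at this
        omega
    have hpsR : (Nat.choose (2*t+1) t : ℝ) ≤ 2 * Nat.centralBinom t := by exact_mod_cast hps
    refine hpsR.trans ?_
    have := centralBinom_le t
    have h2 : 2 * (Nat.centralBinom t : ℝ) ≤ 2 * (4^t / Real.sqrt ((t:ℝ)+1)) := by linarith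
    refine h2.trans ?_
    rw [mul_div_assoc']
    rw [div_le_div_iff₀ (by positivity) (by positivity)]
    have h4 : (2:ℝ) * 4^t = 2^(2*t+1) := by
      rw [show (4:ℝ) = 2^2 from by norm_num, ← pow_mul]
      rw [pow_succ]
      ring
    have hs : Real.sqrt ((2*t+1 : ℕ) : ℝ) ≤ Real.sqrt 2 * Real.sqrt ((t:ℝ)+1) := by
      rw [← Real.sqrt_mul (by norm_num)]
      apply Real.sqrt_le_sqrt; push_cast; nlinarith
    calc 2 * (4:ℝ)^t * Real.sqrt ((2*t+1 : ℕ) : ℝ)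
        ≤ 2 * 4^t * (Real.sqrt 2 * Real.sqrt ((t:ℝ)+1)) := by
          apply mul_le_mul_of_nonneg_left hs (by positivity)
      _ = (2 * 4^t) * Real.sqrt 2 * Real.sqrt ((t:ℝ)+1) := by ring
      _ = 2^(2*t+1) * Real.sqrt 2 * Real.sqrt ((t:ℝ)+1) := by rw [h4]

lemma srwProb_nonneg (m : ℕ) (x : ℤ) : 0 ≤ srwProb m x := by
  unfold srwProb; positivity

lemma srwProb_le (m : ℕ) (hm : 1 ≤ m) (x : ℤ) :
    srwProb m x ≤ Real.sqrt 2 / Real.sqrt m := by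
  unfold srwProb
  have h1 : ((univ.filter fun σ : Fin m → Bool => walkPos m σ m = x).card : ℝ)
      ≤ (m.choose (m/2) : ℝ) := by exact_mod_cast card_fiber_le m x
  have h2 := choose_middle_le m hm
  have h3 : (0:ℝ) < 2 ^ m := by positivity
  calc ((2:ℝ)^m)⁻¹ * ((univ.filter fun σ : Fin m → Bool => walkPos m σ m = x).card : ℝ)
      ≤ ((2:ℝ)^m)⁻¹ * (2 ^ m * Real.sqrt 2 / Real.sqrt m) := by
        apply mul_le_mul_of_nonneg_left (h1.trans h2) (by positivity)
    _ = Real.sqrt 2 / Real.sqrt m := by field_simp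

lemma sum_srwProb_le_one (m : ℕ) (S : Finset ℤ) : ∑ z ∈ S, srwProb m z ≤ 1 := by
  unfold srwProb
  rw [← Finset.mul_sum]
  have hcards : ∑ z ∈ S, ((univ.filter fun σ : Fin m → Bool => walkPos m σ m = z).card : ℝ)
      ≤ (2:ℝ)^m := by
    have key : ∑ z ∈ S, (univ.filter fun σ : Fin m → Bool => walkPos m σ m = z).card
        ≤ 2^m := by
      have hfib := Finset.card_eq_sum_card_fiberwise
        (f := fun σ : Fin m → Bool => walkPos m σ m)
        (s := univ.filter fun σ : Fin m → Bool => walkPos m σ m ∈ S) (t := S)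
        (fun σ hσ => (mem_filter.mp hσ).2)
      have heq : ∀ z ∈ S,
          ((univ.filter fun σ : Fin m → Bool => walkPos m σ m ∈ S).filter
            fun σ => walkPos m σ m = z).card
          = (univ.filter fun σ : Fin m → Bool => walkPos m σ m = z).card := by
        intro z hz
        congr 1
        rw [Finset.filter_filter]
        apply Finset.filter_congr
        intro σ _
        constructor
        · exact fun h => h.2
        · exact fun h => ⟨h ▸ hz, h⟩
      calc ∑ z ∈ S, (univ.filter fun σ : Fin m → Bool => walkPos m σ m = z).card
          = ∑ z ∈ S, ((univ.filter fun σ : Fin m → Bool => walkPos m σ m ∈ S).filter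
              fun σ => walkPos m σ m = z).card := by
            exact Finset.sum_congr rfl (fun z hz => (heq z hz).symm)
        _ = (univ.filter fun σ : Fin m → Bool => walkPos m σ m ∈ S).card := hfib.symm
        _ ≤ (univ : Finset (Fin m → Bool)).card := Finset.card_le_card (Finset.filter_subset _ _)
        _ = 2^m := by simp [Finset.card_univ]
    calc ∑ z ∈ S, ((univ.filter fun σ : Fin m → Bool => walkPos m σ m = z).card : ℝ)
        = ((∑ z ∈ S, (univ.filter fun σ : Fin m → Bool => walkPos m σ m = z).card : ℕ) : ℝ) := by
          push_cast; ring
      _ ≤ ((2^m : ℕ) : ℝ) := by exact_mod_cast key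
      _ = (2:ℝ)^m := by push_cast; ring
  have h3 : (0:ℝ) < 2 ^ m := by positivity
  calc ((2:ℝ)^m)⁻¹ * ∑ z ∈ S, ((univ.filter fun σ : Fin m → Bool => walkPos m σ m = z).card : ℝ)
      ≤ ((2:ℝ)^m)⁻¹ * (2:ℝ)^m := by
        apply mul_le_mul_of_nonneg_left hcards (by positivity)
    _ = 1 := by field_simp

lemma sum_sq_srwProb_le (m : ℕ) (hm : 1 ≤ m) (S : Finset ℤ) :
    ∑ z ∈ S, (srwProb m z)^2 ≤ Real.sqrt 2 / Real.sqrt m := by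
  calc ∑ z ∈ S, (srwProb m z)^2
      ≤ ∑ z ∈ S, (Real.sqrt 2 / Real.sqrt m) * srwProb m z := by
        apply Finset.sum_le_sum
        intro z _
        rw [sq]
        exact mul_le_mul_of_nonneg_right (srwProb_le m hm z) (srwProb_nonneg m z)
    _ = (Real.sqrt 2 / Real.sqrt m) * ∑ z ∈ S, srwProb m z := by rw [Finset.mul_sum]
    _ ≤ (Real.sqrt 2 / Real.sqrt m) * 1 := by
        apply mul_le_mul_of_nonneg_left (sum_srwProb_le_one m S) (by positivity)
    _ = Real.sqrt 2 / Real.sqrt m := by ring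

lemma srwProb_eq_zero (m : ℕ) (x : ℤ) (hx : (m:ℤ) < |x|) : srwProb m x = 0 := by
  unfold srwProb
  have : (univ.filter fun σ : Fin m → Bool => walkPos m σ m = x) = ∅ := by
    rw [Finset.filter_eq_empty_iff]
    intro σ _
    intro h
    have := abs_walkPos_le m σ
    rw [h] at this
    omega
  simp [this]

lemma sum_inv_sqrt_le (N : ℕ) :
    ∑ m ∈ Icc 1 N, (Real.sqrt m)⁻¹ ≤ 2 * Real.sqrt N := by
  induction N with
  | zero => simp
  | succ n ih =>
    rw [Finset.sum_Icc_succ_top (by omega : 1 ≤ n + 1)]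
    have hu : (0:ℝ) < Real.sqrt ((n:ℝ)+1) := by positivity
    have hs : Real.sqrt ((n:ℝ)) * Real.sqrt ((n:ℝ)+1) ≤ (n:ℝ) + 1/2 := by
      rw [← Real.sqrt_mul (by positivity)]
      have : Real.sqrt (((n:ℝ)) * ((n:ℝ)+1)) ≤ Real.sqrt (((n:ℝ)+1/2)^2) := by
        apply Real.sqrt_le_sqrt; nlinarith
      rwa [Real.sqrt_sq (by positivity)] at this
    have hsq : Real.sqrt ((n:ℝ)+1) * Real.sqrt ((n:ℝ)+1) = (n:ℝ)+1 :=
      Real.mul_self_sqrt (by positivity)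
    have key : (2 * Real.sqrt (n:ℝ) + (Real.sqrt ((n:ℝ)+1))⁻¹) * Real.sqrt ((n:ℝ)+1)
        ≤ (2 * Real.sqrt ((n:ℝ)+1)) * Real.sqrt ((n:ℝ)+1) := by
      have he : (2 * Real.sqrt (n:ℝ) + (Real.sqrt ((n:ℝ)+1))⁻¹) * Real.sqrt ((n:ℝ)+1)
          = 2 * (Real.sqrt (n:ℝ) * Real.sqrt ((n:ℝ)+1)) + 1 := by
        field_simp
      rw [he]
      nlinarith
    have hfin := le_of_mul_le_mul_right key hu
    push_cast
    linarith [ih]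

lemma geom_sum_Icc_le (r : ℝ) (h0 : 0 ≤ r) (h1 : r < 1) (M : ℕ) :
    ∑ m ∈ Icc 1 M, r ^ m ≤ (1 - r)⁻¹ := by
  have hsummable : Summable (fun m : ℕ => r ^ m) := summable_geometric_of_lt_one h0 h1
  calc ∑ m ∈ Icc 1 M, r ^ m ≤ ∑' m : ℕ, r ^ m :=
        Summable.sum_le_tsum _ (fun i _ => by positivity) hsummable
    _ = (1 - r)⁻¹ := tsum_geometric_of_lt_one h0 h1

lemma chernoff_G_le (lam : ℝ) (hl : 0 < lam) (hl2 : lam ≤ 1/2) (M : ℕ) :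
    ∑ m ∈ Icc 1 M, (Real.sqrt m)⁻¹ * Real.exp (-(lam * m))
      ≤ 4 / Real.sqrt lam := by
  have hsl : (0:ℝ) < Real.sqrt lam := Real.sqrt_pos.mpr hl
  set g1 : ℕ → ℝ := fun m => if (m:ℝ) * lam ≤ 1 then (Real.sqrt m)⁻¹ else 0 with hg1
  set g2 : ℕ → ℝ := fun m => Real.sqrt lam * Real.exp (-lam) ^ m with hg2
  have hpoint : ∀ m ∈ Icc 1 M, (Real.sqrt m)⁻¹ * Real.exp (-(lam * m)) ≤ g1 m + g2 m := by
    intro m hm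
    rw [mem_Icc] at hm
    have hm1 : (1:ℝ) ≤ m := by exact_mod_cast hm.1
    have hexp : Real.exp (-(lam * m)) = Real.exp (-lam) ^ m := by
      rw [← Real.exp_nat_mul]; ring_nf
    by_cases hc : (m:ℝ) * lam ≤ 1
    · have h1 : (Real.sqrt m)⁻¹ * Real.exp (-(lam * m)) ≤ (Real.sqrt m)⁻¹ := by
        have : Real.exp (-(lam * m)) ≤ 1 := by
          rw [Real.exp_le_one_iff]; nlinarith
        have h0 : (0:ℝ) ≤ (Real.sqrt m)⁻¹ := by positivity
        nlinarith
      have h2 : 0 ≤ g2 m := by rw [hg2]; positivity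
      simp only [hg1, if_pos hc]
      linarith
    · push_neg at hc
      have hkey : (Real.sqrt m)⁻¹ ≤ Real.sqrt lam := by
        rw [inv_le_iff_one_le_mul₀ (by positivity)]
        calc (1:ℝ) ≤ Real.sqrt ((m:ℝ) * lam) := by
              rw [show (1:ℝ) = Real.sqrt 1 from (Real.sqrt_one).symm]
              apply Real.sqrt_le_sqrt; linarith
          _ = Real.sqrt m * Real.sqrt lam := Real.sqrt_mul (by positivity) _
          _ = Real.sqrt lam * Real.sqrt m := by ring
      have h1 : (Real.sqrt m)⁻¹ * Real.exp (-(lam * m)) ≤ g2 m := by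
        rw [hg2, hexp]
        exact mul_le_mul_of_nonneg_right hkey (by positivity)
      have h2 : 0 ≤ g1 m := by simp only [hg1, if_neg (not_le.mpr hc)]; exact le_rfl
      linarith
  have hG1 : ∑ m ∈ Icc 1 M, g1 m ≤ 2 / Real.sqrt lam := by
    have hfilter : ∑ m ∈ Icc 1 M, g1 m
        = ∑ m ∈ (Icc 1 M).filter (fun m : ℕ => (m:ℝ) * lam ≤ 1), (Real.sqrt m)⁻¹ := by
      rw [Finset.sum_filter]
    rw [hfilter]
    set N := ⌊1/lam⌋₊ with hN
    have hsub : (Icc 1 M).filter (fun m : ℕ => (m:ℝ) * lam ≤ 1) ⊆ Icc 1 N := by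
      intro m hmm
      rw [mem_filter, mem_Icc] at hmm
      rw [mem_Icc]
      refine ⟨hmm.1.1, ?_⟩
      rw [hN]
      apply Nat.le_floor
      rw [le_div_iff₀ hl]
      exact hmm.2
    calc ∑ m ∈ (Icc 1 M).filter (fun m : ℕ => (m:ℝ) * lam ≤ 1), (Real.sqrt m)⁻¹
        ≤ ∑ m ∈ Icc 1 N, (Real.sqrt m)⁻¹ :=
          Finset.sum_le_sum_of_subset_of_nonneg hsub (fun i _ _ => by positivity)
      _ ≤ 2 * Real.sqrt N := sum_inv_sqrt_le N
      _ ≤ 2 * Real.sqrt (1/lam) := by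
          apply mul_le_mul_of_nonneg_left ?_ (by norm_num)
          apply Real.sqrt_le_sqrt
          exact Nat.floor_le (by positivity)
      _ = 2 / Real.sqrt lam := by
          rw [one_div, Real.sqrt_inv, div_eq_mul_inv]
  have hexpl : Real.exp (-lam) < 1 := by
    rw [Real.exp_lt_one_iff]; linarith
  have hexpl0 : 0 ≤ Real.exp (-lam) := Real.exp_nonneg _
  have hhalf : (1:ℝ)/2 ≤ Real.exp (-lam) := by
    have := Real.add_one_le_exp (-lam)
    linarith
  have honem : lam / 2 ≤ 1 - Real.exp (-lam) := by
    have h1 : lam + 1 ≤ Real.exp lam := Real.add_one_le_exp lam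
    have h2 : (lam + 1) * Real.exp (-lam) ≤ Real.exp lam * Real.exp (-lam) :=
      mul_le_mul_of_nonneg_right h1 hexpl0
    rw [← Real.exp_add] at h2
    simp at h2
    -- h2 : (lam + 1) * exp (-lam) ≤ 1
    nlinarith
  have hG2 : ∑ m ∈ Icc 1 M, g2 m ≤ 2 / Real.sqrt lam := by
    have hgeom := geom_sum_Icc_le (Real.exp (-lam)) hexpl0 hexpl M
    have hinv : (1 - Real.exp (-lam))⁻¹ ≤ 2 / lam := by
      rw [show (2:ℝ)/lam = (lam/2)⁻¹ by field_simp]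
      apply inv_anti₀ (by positivity) honem
    have hlamsq : Real.sqrt lam * Real.sqrt lam = lam := Real.mul_self_sqrt hl.le
    calc ∑ m ∈ Icc 1 M, g2 m
        = Real.sqrt lam * ∑ m ∈ Icc 1 M, Real.exp (-lam) ^ m := by
          rw [hg2, Finset.mul_sum]
      _ ≤ Real.sqrt lam * (1 - Real.exp (-lam))⁻¹ := by
          apply mul_le_mul_of_nonneg_left hgeom hsl.le
      _ ≤ Real.sqrt lam * (2 / lam) := by
          apply mul_le_mul_of_nonneg_left hinv hsl.le
      _ = 2 / Real.sqrt lam := by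
          rw [eq_div_iff hsl.ne']
          field_simp
          nlinarith [hlamsq]
  calc ∑ m ∈ Icc 1 M, (Real.sqrt m)⁻¹ * Real.exp (-(lam * m))
      ≤ ∑ m ∈ Icc 1 M, (g1 m + g2 m) := Finset.sum_le_sum hpoint
    _ = ∑ m ∈ Icc 1 M, g1 m + ∑ m ∈ Icc 1 M, g2 m := Finset.sum_add_distrib
    _ ≤ 2 / Real.sqrt lam + 2 / Real.sqrt lam := add_le_add hG1 hG2
    _ = 4 / Real.sqrt lam := by ring

lemma prevV_zero {α : Type*} {k : ℕ} (v0 : α) (v : Fin k → α) (j : Fin k) (hj : (j:ℕ) = 0) :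
    prevV v0 v j = v0 := by rw [prevV, dif_pos hj]

lemma prevV_pos {α : Type*} {k : ℕ} (v0 : α) (v : Fin k → α) (j : Fin k) (hj : (j:ℕ) ≠ 0) :
    prevV v0 v j = v ⟨(j : ℕ) - 1, lt_of_le_of_lt (Nat.sub_le _ 1) j.isLt⟩ := by
  rw [prevV, dif_neg hj]

lemma prevV_castSucc {α : Type*} {k : ℕ} (v0 : α) (v : Fin (k+1) → α) (j : Fin k) :
    prevV v0 v (Fin.castSucc j) = prevV v0 (v ∘ Fin.castSucc) j := by
  by_cases hj : (j:ℕ) = 0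
  · rw [prevV_zero _ _ _ (by simpa using hj), prevV_zero _ _ _ hj]
  · rw [prevV_pos _ _ _ (by simpa using hj), prevV_pos _ _ _ hj]
    try exact congrArg v (Fin.ext (by simp))

lemma prevV_lt {k : ℕ} (i : Fin k → ℕ) (hmono : ∀ a b : Fin k, a < b → i a < i b)
    (h1 : ∀ j, 1 ≤ i j) (j : Fin k) : prevV 0 i j < i j := by
  by_cases hj : (j:ℕ) = 0
  · rw [prevV_zero _ _ _ hj]; exact h1 j
  · rw [prevV_pos _ _ _ hj]
    apply hmono
    simp only [Fin.lt_def]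
    omega

lemma sum_incr_eq (k : ℕ) : ∀ (i : Fin (k+1) → ℕ), (∀ a b : Fin (k+1), a < b → i a < i b) →
    ∑ j : Fin (k+1), (i j - prevV 0 i j) = i (Fin.last k) := by
  induction k with
  | zero =>
    intro i _
    rw [Fin.sum_univ_one]
    rw [prevV_zero _ _ _ (by simp)]
    simp
  | succ n ih =>
    intro i hmono
    rw [Fin.sum_univ_castSucc]
    have hstep : ∀ j : Fin (n+1),
        i (Fin.castSucc j) - prevV 0 i (Fin.castSucc j)
          = (i ∘ Fin.castSucc) j - prevV 0 (i ∘ Fin.castSucc) j := by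
      intro j
      rw [prevV_castSucc]
      try rfl
    rw [Finset.sum_congr rfl (fun j _ => hstep j)]
    have hmono' : ∀ a b : Fin (n+1), a < b → (i ∘ Fin.castSucc) a < (i ∘ Fin.castSucc) b := by
      intro a b hab
      exact hmono _ _ (by simpa using hab)
    rw [ih _ hmono']
    have hlast : prevV 0 i (Fin.last (n+1)) = i (Fin.castSucc (Fin.last n)) := by
      rw [prevV_pos _ _ _ (by simp)]
      try exact congrArg i (Fin.ext (by simp))
    rw [hlast]
    have hle : i (Fin.castSucc (Fin.last n)) ≤ i (Fin.last (n+1)) := by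
      apply le_of_lt
      apply hmono
      rw [Fin.lt_def]
      simp
    simp only [Function.comp_apply]
    omega

lemma mem_incrTimes {k M : ℕ} {i : Fin k → ℕ} (hi : i ∈ incrTimes k M) :
    (∀ j, 1 ≤ i j ∧ i j ≤ M) ∧ ∀ a b : Fin k, a < b → i a < i b := by
  rw [incrTimes, mem_filter, Fintype.mem_piFinset] at hi
  exact ⟨fun j => by have := hi.1 j; rw [mem_Icc] at this; exact this, hi.2⟩

lemma incrTimes_sum_le {k M : ℕ} (hk : 1 ≤ k) {i : Fin k → ℕ} (hi : i ∈ incrTimes k M) :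
    ∑ j : Fin k, (i j - prevV 0 i j) ≤ M := by
  obtain ⟨k', rfl⟩ : ∃ k', k = k' + 1 := ⟨k - 1, by omega⟩
  rw [sum_incr_eq k' i (mem_incrTimes hi).2]
  exact ((mem_incrTimes hi).1 _).2

lemma incr_inj {k M : ℕ} {i i' : Fin k → ℕ} (hi : i ∈ incrTimes k M) (hi' : i' ∈ incrTimes k M)
    (h : (fun j => i j - prevV 0 i j) = fun j => i' j - prevV 0 i' j) : i = i' := by
  obtain ⟨⟨h1, hmono⟩⟩ := And.intro (mem_incrTimes hi) (mem_incrTimes hi')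
  have h1' := (mem_incrTimes hi').1
  have hmono' := (mem_incrTimes hi').2
  have key : ∀ (j : ℕ) (hj : j < k), i ⟨j, hj⟩ = i' ⟨j, hj⟩ := by
    intro j
    induction j with
    | zero =>
      intro hj
      have := congrFun h ⟨0, hj⟩
      rw [prevV_zero _ _ _ rfl, prevV_zero _ _ _ rfl] at this
      omega
    | succ n ihn =>
      intro hj
      have hlt : n < k := by omega
      have hprev : i ⟨n, hlt⟩ = i' ⟨n, hlt⟩ := ihn hlt
      have hd : i ⟨n+1, hj⟩ - i ⟨n, hlt⟩ = i' ⟨n+1, hj⟩ - i' ⟨n, hlt⟩ := by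
        have hc := congrFun h ⟨n+1, hj⟩
        rw [prevV_pos _ _ _ (by simp), prevV_pos _ _ _ (by simp)] at hc
        exact hc
      have hlt1 : i ⟨n, hlt⟩ < i ⟨n+1, hj⟩ := by
        have := prevV_lt i hmono (fun j => (h1 j).1) ⟨n+1, hj⟩
        rw [prevV_pos _ _ _ (by simp)] at this
        exact this
      have hlt2 : i' ⟨n, hlt⟩ < i' ⟨n+1, hj⟩ := by
        have := prevV_lt i' hmono' (fun j => (h1' j).1) ⟨n+1, hj⟩
        rw [prevV_pos _ _ _ (by simp)] at this
        exact this
      omega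
  funext j
  have := key (j:ℕ) j.isLt
  simpa using this

lemma incrTimes_lower {k M : ℕ} {i : Fin k → ℕ} (hi : i ∈ incrTimes k M) :
    ∀ j : Fin k, (j:ℕ) + 1 ≤ i j := by
  obtain ⟨h1, hmono⟩ := mem_incrTimes hi
  have key : ∀ (n:ℕ) (j : Fin k), (j:ℕ) = n → n + 1 ≤ i j := by
    intro n
    induction n with
    | zero => intro j _; exact (h1 j).1
    | succ n ihn =>
      intro j hj
      have hlt : n < k := by omega
      have hprev := ihn ⟨n, hlt⟩ rfl
      have : i ⟨n, hlt⟩ < i j := by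
        apply hmono
        rw [Fin.lt_def]
        simp only [Fin.val_mk]
        omega
      omega
  exact fun j => key (j:ℕ) j rfl

lemma incrTimes_empty {k M : ℕ} (hk : 1 ≤ k) (hM : M < k) : incrTimes k M = ∅ := by
  rw [Finset.eq_empty_iff_forall_notMem]
  intro i hi
  have hlow := incrTimes_lower hi ⟨k-1, by omega⟩
  have hup := ((mem_incrTimes hi).1 ⟨k-1, by omega⟩).2
  simp at hlow
  omega

lemma sqrt_pi_le_two : Real.sqrt Real.pi ≤ 2 := by
  have h := Real.sqrt_le_sqrt Real.pi_le_four
  rwa [show (4:ℝ) = 2^2 by norm_num, Real.sqrt_sq (by norm_num)] at h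

lemma Gamma_half_le : ∀ k : ℕ, Real.Gamma ((k:ℝ)/2 + 1) ≤ (k:ℝ) ^ ((k:ℝ)/2) := by
  intro k
  induction k using Nat.strong_induction_on with
  | _ k ih =>
    match k, ih with
    | 0, _ => simp [Real.Gamma_one]
    | 1, _ =>
      have h1 : ((1:ℕ):ℝ)/2 + 1 = 1/2 + 1 := by norm_num
      rw [h1, Real.Gamma_add_one (by norm_num), Real.Gamma_one_half_eq]
      have : ((1:ℕ):ℝ) ^ (((1:ℕ):ℝ)/2) = 1 := by
        rw [Nat.cast_one, Real.one_rpow]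
      rw [this]
      nlinarith [sqrt_pi_le_two, Real.sqrt_nonneg Real.pi]
    | 2, _ =>
      have h1 : ((2:ℕ):ℝ)/2 + 1 = 2 := by norm_num
      rw [h1, Real.Gamma_two]
      have h2 : ((2:ℕ):ℝ) ^ (((2:ℕ):ℝ)/2) = 2 := by
        rw [show (((2:ℕ):ℝ)/2) = 1 by norm_num, Real.rpow_one]; norm_num
      rw [h2]; norm_num
    | (n+3), ih =>
      have ihm := ih (n+1) (by omega)
      have hm2 : ((n+3:ℕ):ℝ) = ((n+1:ℕ):ℝ) + 2 := by push_cast; ring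
      set m : ℝ := ((n+1:ℕ):ℝ) with hm
      have hmpos : (0:ℝ) < m := by rw [hm]; positivity
      have harg : ((n+3:ℕ):ℝ)/2 + 1 = (m/2 + 1) + 1 := by rw [hm2]; ring
      rw [harg, Real.Gamma_add_one (by positivity)]
      have hGnn : 0 < Real.Gamma (m/2 + 1) := Real.Gamma_pos_of_pos (by positivity)
      have step1 : (m/2 + 1) * Real.Gamma (m/2+1) ≤ (m/2+1) * m ^ (m/2) := by
        apply mul_le_mul_of_nonneg_left ihm (by positivity)
      refine step1.trans ?_
      have hle : m ^ (m/2) ≤ (m+2) ^ (m/2) := by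
        apply Real.rpow_le_rpow hmpos.le (by linarith) (by positivity)
      have key : (m/2+1) * m ^ (m/2) ≤ (m+2) * (m+2) ^ (m/2) := by
        have h1 : (m/2+1) * m ^ (m/2) ≤ (m/2+1) * (m+2) ^ (m/2) :=
          mul_le_mul_of_nonneg_left hle (by positivity)
        refine h1.trans ?_
        apply mul_le_mul_of_nonneg_right (by linarith) (by positivity)
      refine key.trans ?_
      rw [hm2]
      have : (m+2) ^ (((m+2):ℝ)/2) = (m+2) ^ (m/2) * (m+2) := by
        rw [show ((m+2):ℝ)/2 = m/2 + 1 by ring, Real.rpow_add (by linarith), Real.rpow_one]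
      rw [this]
      nlinarith [Real.rpow_nonneg (by linarith : (0:ℝ) ≤ m + 2) (m/2)]

/-- ℤ telescoping injectivity -/
lemma phi_inj {k : ℕ} (x x' : Fin k → ℤ)
    (h : ∀ j, x j - prevV 0 x j = x' j - prevV 0 x' j) : x = x' := by
  have key : ∀ (n : ℕ) (hn : n < k), x ⟨n, hn⟩ = x' ⟨n, hn⟩ := by
    intro n
    induction n with
    | zero =>
      intro hn
      have := h ⟨0, hn⟩
      rw [prevV_zero _ _ _ rfl, prevV_zero _ _ _ rfl] at this
      omega
    | succ n ihn =>
      intro hn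
      have hlt : n < k := by omega
      have hprev := ihn hlt
      have hd := h ⟨n+1, hn⟩
      rw [prevV_pos _ _ _ (by simp), prevV_pos _ _ _ (by simp)] at hd
      have hd' : x ⟨n+1, hn⟩ - x ⟨n, hlt⟩ = x' ⟨n+1, hn⟩ - x' ⟨n, hlt⟩ := hd
      omega
  funext j
  have := key (j:ℕ) j.isLt
  simpa using this

/-- The inner tsum bound. -/
lemma inner_tsum_le {k M : ℕ} (hk : 1 ≤ k) {i : Fin k → ℕ} (hi : i ∈ incrTimes k M) :
    (∑' x : Fin k → ℤ, ∏ j : Fin k, (srwProb (i j - prevV 0 i j) (x j - prevV 0 x j)) ^ 2)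
      ≤ ∏ j : Fin k, (Real.sqrt 2 * (Real.sqrt (i j - prevV 0 i j : ℕ))⁻¹) := by
  obtain ⟨hb, hmono⟩ := mem_incrTimes hi
  set mj : Fin k → ℕ := fun j => i j - prevV 0 i j with hmj
  have hmj1 : ∀ j, 1 ≤ mj j := by
    intro j
    have := prevV_lt i hmono (fun j => (hb j).1) j
    simp only [hmj]
    omega
  have hprevle : ∀ j : Fin k, prevV 0 i j ≤ M := by
    intro j
    by_cases hj : (j:ℕ) = 0
    · rw [prevV_zero _ _ _ hj]; omega
    · rw [prevV_pos _ _ _ hj]; exact (hb _).2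
  set F : (Fin k → ℤ) → ℝ := fun x => ∏ j : Fin k, (srwProb (mj j) (x j - prevV 0 x j)) ^ 2
    with hF
  set A : Finset (Fin k → ℤ) := Fintype.piFinset fun _ : Fin k => Finset.Icc (-(M:ℤ)) M with hA
  -- support
  have hsupp : ∀ x : Fin k → ℤ, x ∉ A → F x = 0 := by
    intro x hx
    by_contra hFx
    have hfac : ∀ j : Fin k, srwProb (mj j) (x j - prevV 0 x j) ≠ 0 := by
      intro j
      intro h0
      apply hFx
      rw [hF]
      apply Finset.prod_eq_zero (Finset.mem_univ j)
      rw [h0]; ring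
    have habs : ∀ j : Fin k, |x j - prevV 0 x j| ≤ (mj j : ℤ) := by
      intro j
      by_contra hc
      exact hfac j (srwProb_eq_zero _ _ (by omega))
    have hbound : ∀ (n : ℕ) (hn : n < k), |x ⟨n, hn⟩| ≤ (i ⟨n, hn⟩ : ℤ) := by
      intro n
      induction n with
      | zero =>
        intro hn
        have := habs ⟨0, hn⟩
        rw [prevV_zero _ _ _ rfl, sub_zero] at this
        have hmm : (mj ⟨0, hn⟩ : ℤ) ≤ i ⟨0, hn⟩ := by
          simp only [hmj]; push_cast [Nat.sub_le]; omega
        rw [abs_le] at this ⊢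
        omega
      | succ n ihn =>
        intro hn
        have hlt : n < k := by omega
        have hprev := ihn hlt
        have h1 := habs ⟨n+1, hn⟩
        rw [prevV_pos _ _ _ (by simp)] at h1
        have h1' : |x ⟨n+1, hn⟩ - x ⟨n, hlt⟩| ≤ (mj ⟨n+1, hn⟩ : ℤ) := h1
        have hieq : (mj ⟨n+1, hn⟩ : ℤ) = (i ⟨n+1, hn⟩ : ℤ) - (i ⟨n, hlt⟩ : ℤ) := by
          simp only [hmj]
          have hple : prevV 0 i ⟨n+1, hn⟩ ≤ i ⟨n+1, hn⟩ :=
            le_of_lt (prevV_lt i hmono (fun j => (hb j).1) _)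
          rw [Nat.cast_sub hple]
          have : prevV 0 i (⟨n+1, hn⟩ : Fin k) = i ⟨n, hlt⟩ := by
            rw [prevV_pos _ _ _ (by simp)]
            exact congrArg i (Fin.ext rfl)
          rw [this]
        rw [abs_le] at h1' hprev ⊢
        omega
    apply hx
    rw [hA, Fintype.mem_piFinset]
    intro j
    rw [Finset.mem_Icc]
    have := hbound (j:ℕ) j.isLt
    have h2 : i j ≤ M := (hb j).2
    have h34 : (⟨(j:ℕ), j.isLt⟩ : Fin k) = j := Fin.ext rfl
    rw [h34] at this
    rw [abs_le] at this
    constructor <;> omega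
  rw [tsum_eq_sum hsupp]
  set Φ : (Fin k → ℤ) → (Fin k → ℤ) := fun x j => x j - prevV 0 x j with hΦ
  set G : (Fin k → ℤ) → ℝ := fun y => ∏ j : Fin k, (srwProb (mj j) (y j)) ^ 2 with hG
  set B : Finset (Fin k → ℤ) := Fintype.piFinset fun _ : Fin k => Finset.Icc (-(2*M:ℤ)) (2*M)
    with hB
  have hinj : ∀ x ∈ A, ∀ x' ∈ A, Φ x = Φ x' → x = x' := by
    intro x _ x' _ hxy
    exact phi_inj x x' (fun j => congrFun hxy j)
  have himg : A.image Φ ⊆ B := by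
    intro y hy
    rw [Finset.mem_image] at hy
    obtain ⟨x, hxA, rfl⟩ := hy
    rw [hB, Fintype.mem_piFinset]
    intro j
    rw [hA, Fintype.mem_piFinset] at hxA
    have h1 := hxA j
    rw [Finset.mem_Icc] at h1
    have h2 : -(M:ℤ) ≤ prevV 0 x j ∧ prevV 0 x j ≤ M := by
      by_cases hj : (j:ℕ) = 0
      · rw [prevV_zero _ _ _ hj]; constructor <;> omega
      · rw [prevV_pos _ _ _ hj]
        have := hxA ⟨(j:ℕ)-1, lt_of_le_of_lt (Nat.sub_le _ 1) j.isLt⟩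
        rw [Finset.mem_Icc] at this
        exact this
    rw [Finset.mem_Icc]
    simp only [hΦ]
    omega
  calc ∑ x ∈ A, F x
      = ∑ y ∈ A.image Φ, G y := by
        rw [Finset.sum_image hinj]
    _ ≤ ∑ y ∈ B, G y := by
        apply Finset.sum_le_sum_of_subset_of_nonneg himg
        intro y _ _
        rw [hG]
        apply Finset.prod_nonneg
        intro j _
        positivity
    _ = ∏ j : Fin k, ∑ z ∈ Finset.Icc (-(2*M:ℤ)) (2*M), (srwProb (mj j) z)^2 := by
        rw [hG, hB, Finset.prod_univ_sum]
    _ ≤ ∏ j : Fin k, (Real.sqrt 2 * (Real.sqrt (mj j))⁻¹) := by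
        apply Finset.prod_le_prod
        · intro j _
          apply Finset.sum_nonneg
          intro z _
          positivity
        · intro j _
          have := sum_sq_srwProb_le (mj j) (hmj1 j) (Finset.Icc (-(2*M:ℤ)) (2*M))
          rwa [div_eq_mul_inv] at this

/-- a uniform bound on the sums of squared transition probabilities along
increasing time tuples. -/
theorem sum_squared_transition_bound :
    ∃ C : ℝ, 0 < C ∧ ∀ k : ℕ, 1 ≤ k → ∀ T : ℝ, 0 < T → ∀ n : ℕ, 1 ≤ n →
      ((n : ℝ) ^ ((k : ℝ) / 2))⁻¹ *
          ∑ i ∈ incrTimes k ⌊T * n⌋₊,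
            ∑' x : Fin k → ℤ,
              ∏ j : Fin k, (srwProb (i j - prevV 0 i j) (x j - prevV 0 x j)) ^ 2
        ≤ C ^ k * T ^ ((k : ℝ) / 2) / Real.Gamma ((k : ℝ) / 2 + 1) := by
  refine ⟨100, by norm_num, ?_⟩
  intro k hk T hT n hn
  set M := ⌊T * n⌋₊ with hM
  have hGpos : 0 < Real.Gamma ((k:ℝ)/2 + 1) := Real.Gamma_pos_of_pos (by positivity)
  have hrhs_nonneg : 0 ≤ (100:ℝ) ^ k * T ^ ((k:ℝ)/2) / Real.Gamma ((k:ℝ)/2 + 1) := by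
    apply div_nonneg ?_ hGpos.le
    apply mul_nonneg (by positivity) (Real.rpow_nonneg hT.le _)
  have hnpow : (0:ℝ) < ((n:ℝ) ^ ((k:ℝ)/2)) := by
    apply Real.rpow_pos_of_pos
    exact_mod_cast Nat.lt_of_lt_of_le Nat.zero_lt_one hn
  by_cases hMk : M < k
  · rw [incrTimes_empty hk hMk]
    simp only [Finset.sum_empty, mul_zero]
    exact hrhs_nonneg
  push_neg at hMk  -- k ≤ M
  have hM1 : 1 ≤ M := le_trans hk hMk
  have hMpos : (0:ℝ) < M := by exact_mod_cast hM1
  have hkpos : (0:ℝ) < k := by exact_mod_cast hk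
  set lam : ℝ := (k:ℝ) / (2 * M) with hlam
  have hlampos : 0 < lam := by positivity
  have hlamhalf : lam ≤ 1/2 := by
    rw [hlam, div_le_iff₀ (by positivity)]
    have : (k:ℝ) ≤ M := by exact_mod_cast hMk
    linarith
  have hlamM : lam * M = (k:ℝ)/2 := by
    rw [hlam]; field_simp
  -- notation
  set E : (Fin k → ℕ) → (Fin k → ℕ) := fun i j => i j - prevV 0 i j with hE
  set h : ℕ → ℝ := fun m => (Real.sqrt m)⁻¹ * Real.exp (-(lam * m)) with hh
  have hh_nonneg : ∀ m, 0 ≤ h m := by intro m; rw [hh]; positivity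
  -- step C (per tuple)
  have stepC : ∀ i ∈ incrTimes k M, ∏ j : Fin k, (Real.sqrt (E i j))⁻¹
      ≤ Real.exp ((k:ℝ)/2) * ∏ j : Fin k, h (E i j) := by
    intro i hi
    have hsum : ∑ j : Fin k, (E i j) ≤ M := incrTimes_sum_le hk hi
    have hprod : ∏ j : Fin k, h (E i j)
        = (∏ j : Fin k, (Real.sqrt (E i j))⁻¹) * Real.exp (-(lam * ∑ j : Fin k, (E i j : ℝ))) := by
      rw [hh, Finset.prod_mul_distrib]
      congr 1
      rw [← Real.exp_sum]
      congr 1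
      rw [Finset.mul_sum, ← Finset.sum_neg_distrib]
    rw [hprod, ← mul_assoc, mul_comm (Real.exp ((k:ℝ)/2)) _, mul_assoc, ← Real.exp_add]
    have hexp1 : 1 ≤ Real.exp ((k:ℝ)/2 + -(lam * ∑ j : Fin k, (E i j : ℝ))) := by
      rw [Real.one_le_exp_iff]
      have hsumr : (∑ j : Fin k, (E i j : ℝ)) ≤ (M:ℝ) := by
        exact_mod_cast hsum
      have := mul_le_mul_of_nonneg_left hsumr hlampos.le
      rw [← hlamM]
      linarith
    nlinarith [Finset.prod_nonneg (fun j (_ : j ∈ univ) => by positivity :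
      ∀ j ∈ univ, (0:ℝ) ≤ (Real.sqrt (E i j))⁻¹)]
  -- main sum bound
  have main : ∑ i ∈ incrTimes k M,
      (∑' x : Fin k → ℤ, ∏ j : Fin k, (srwProb (i j - prevV 0 i j) (x j - prevV 0 x j)) ^ 2)
      ≤ (Real.sqrt 2)^k * Real.exp ((k:ℝ)/2) * (4 / Real.sqrt lam)^k := by
    calc ∑ i ∈ incrTimes k M,
        (∑' x : Fin k → ℤ, ∏ j : Fin k, (srwProb (i j - prevV 0 i j) (x j - prevV 0 x j)) ^ 2)
        ≤ ∑ i ∈ incrTimes k M, ∏ j : Fin k, (Real.sqrt 2 * (Real.sqrt (E i j))⁻¹) := by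
          apply Finset.sum_le_sum
          intro i hi
          exact inner_tsum_le hk hi
      _ = ∑ i ∈ incrTimes k M, (Real.sqrt 2)^k * ∏ j : Fin k, (Real.sqrt (E i j))⁻¹ := by
          apply Finset.sum_congr rfl
          intro i _
          rw [Finset.prod_mul_distrib, Finset.prod_const, Finset.card_univ, Fintype.card_fin]
      _ ≤ ∑ i ∈ incrTimes k M, (Real.sqrt 2)^k *
            (Real.exp ((k:ℝ)/2) * ∏ j : Fin k, h (E i j)) := by
          apply Finset.sum_le_sum
          intro i hi
          apply mul_le_mul_of_nonneg_left (stepC i hi) (by positivity)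
      _ = (Real.sqrt 2)^k * Real.exp ((k:ℝ)/2) *
            ∑ i ∈ incrTimes k M, ∏ j : Fin k, h (E i j) := by
          simp_rw [← mul_assoc]
          rw [← Finset.mul_sum]
      _ ≤ (Real.sqrt 2)^k * Real.exp ((k:ℝ)/2) *
            ∑ m ∈ Fintype.piFinset (fun _ : Fin k => Icc 1 M), ∏ j : Fin k, h (m j) := by
          apply mul_le_mul_of_nonneg_left ?_ (by positivity)
          have himg : (incrTimes k M).image E ⊆ Fintype.piFinset (fun _ : Fin k => Icc 1 M) := by
            intro y hy
            rw [Finset.mem_image] at hy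
            obtain ⟨i, hi, rfl⟩ := hy
            rw [Fintype.mem_piFinset]
            intro j
            rw [mem_Icc]
            obtain ⟨hb, hmono⟩ := mem_incrTimes hi
            have := prevV_lt i hmono (fun j => (hb j).1) j
            have h2 := (hb j).2
            simp only [hE]
            omega
          calc ∑ i ∈ incrTimes k M, ∏ j : Fin k, h (E i j)
              = ∑ y ∈ (incrTimes k M).image E, ∏ j : Fin k, h (y j) := by
                rw [Finset.sum_image]
                intro i hi i' hi' hii
                exact incr_inj hi hi' hii
            _ ≤ ∑ m ∈ Fintype.piFinset (fun _ : Fin k => Icc 1 M), ∏ j : Fin k, h (m j) := by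
                apply Finset.sum_le_sum_of_subset_of_nonneg himg
                intro m _ _
                exact Finset.prod_nonneg (fun j _ => hh_nonneg _)
      _ = (Real.sqrt 2)^k * Real.exp ((k:ℝ)/2) * (∑ m ∈ Icc 1 M, h m)^k := by
          congr 1
          rw [← Finset.prod_univ_sum]
          rw [Finset.prod_const, Finset.card_univ, Fintype.card_fin]
      _ ≤ (Real.sqrt 2)^k * Real.exp ((k:ℝ)/2) * (4 / Real.sqrt lam)^k := by
          apply mul_le_mul_of_nonneg_left ?_ (by positivity)
          apply pow_le_pow_left₀ ?_ ?_ k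
          · apply Finset.sum_nonneg; intro m _; exact hh_nonneg m
          · exact chernoff_G_le lam hlampos hlamhalf M
  -- now the closing arithmetic
  have hMle : (M:ℝ) ≤ T * n := by
    rw [hM]
    exact Nat.floor_le (by positivity)
  have hnR : (0:ℝ) < n := by exact_mod_cast Nat.lt_of_lt_of_le Nat.zero_lt_one hn
  set a : ℝ := T * n / k with ha
  have hapos : 0 < a := by positivity
  -- exp(k/2) = exp(1/2)^k
  have hexpk : Real.exp ((k:ℝ)/2) = Real.exp (1/2) ^ k := by
    rw [show (k:ℝ)/2 = (k:ℕ) * (1/2:ℝ) by push_cast; ring, Real.exp_nat_mul]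
  have he12 : Real.exp ((1:ℝ)/2) ≤ 2 := by
    have h1 : Real.exp ((1:ℝ)/2) * Real.exp ((1:ℝ)/2) = Real.exp 1 := by
      rw [← Real.exp_add]; norm_num
    have h2 : Real.exp 1 ≤ 4 := by
      have := Real.exp_one_lt_d9
      linarith
    nlinarith [Real.exp_pos ((1:ℝ)/2)]
  -- (√lam)⁻¹ ≤ √2 * √a
  have hinv : (Real.sqrt lam)⁻¹ ≤ Real.sqrt 2 * Real.sqrt a := by
    rw [← Real.sqrt_inv]
    have hlaminv : lam⁻¹ = 2 * M / k := by
      rw [hlam]; field_simp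
    rw [hlaminv, ← Real.sqrt_mul (by norm_num : (0:ℝ) ≤ 2)]
    apply Real.sqrt_le_sqrt
    rw [ha, show 2*(T*(n:ℝ)/(k:ℝ)) = 2*(T*(n:ℝ))/(k:ℝ) by ring, div_le_div_iff₀ hkpos hkpos]
    nlinarith
  have hbase : Real.sqrt 2 * Real.exp ((1:ℝ)/2) * (4 / Real.sqrt lam)
      ≤ 16 * Real.sqrt a := by
    have hs2 : Real.sqrt 2 * Real.sqrt 2 = 2 := Real.mul_self_sqrt (by norm_num)
    calc Real.sqrt 2 * Real.exp ((1:ℝ)/2) * (4 / Real.sqrt lam)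
        = (Real.sqrt 2 * 4) * (Real.exp ((1:ℝ)/2) * (Real.sqrt lam)⁻¹) := by
          rw [div_eq_mul_inv]; ring
      _ ≤ (Real.sqrt 2 * 4) * (2 * (Real.sqrt 2 * Real.sqrt a)) := by
          apply mul_le_mul_of_nonneg_left ?_ (by positivity)
          apply mul_le_mul he12 hinv (by positivity) (by norm_num)
      _ = (Real.sqrt 2 * Real.sqrt 2) * (8 * Real.sqrt a) := by ring
      _ = 16 * Real.sqrt a := by rw [hs2]; ring
  -- combine powers
  have hpowbound : (Real.sqrt 2)^k * Real.exp ((k:ℝ)/2) * (4 / Real.sqrt lam)^k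
      ≤ 16^k * (Real.sqrt a)^k := by
    rw [hexpk, ← mul_pow, ← mul_pow, ← mul_pow]
    apply pow_le_pow_left₀ (by positivity) hbase k
  have hsqak : (Real.sqrt a)^k = a ^ ((k:ℝ)/2) := by
    rw [Real.sqrt_eq_rpow, ← Real.rpow_natCast (a ^ ((1:ℝ)/2)) k, ← Real.rpow_mul hapos.le]
    congr 1
    push_cast; ring
  have hsplit : a ^ ((k:ℝ)/2)
      = T ^ ((k:ℝ)/2) * (n:ℝ) ^ ((k:ℝ)/2) * (((k:ℝ) ^ ((k:ℝ)/2))⁻¹) := by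
    rw [ha, div_eq_mul_inv, Real.mul_rpow (by positivity) (by positivity),
      Real.mul_rpow hT.le (by positivity), Real.inv_rpow hkpos.le]
  have hGinv : ((k:ℝ) ^ ((k:ℝ)/2))⁻¹ ≤ (Real.Gamma ((k:ℝ)/2 + 1))⁻¹ :=
    inv_anti₀ hGpos (Gamma_half_le k)
  have hTk : 0 ≤ T ^ ((k:ℝ)/2) := Real.rpow_nonneg hT.le _
  calc ((n : ℝ) ^ ((k : ℝ) / 2))⁻¹ *
          ∑ i ∈ incrTimes k M,
            ∑' x : Fin k → ℤ,
              ∏ j : Fin k, (srwProb (i j - prevV 0 i j) (x j - prevV 0 x j)) ^ 2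
      ≤ ((n : ℝ) ^ ((k : ℝ) / 2))⁻¹ *
          ((Real.sqrt 2)^k * Real.exp ((k:ℝ)/2) * (4 / Real.sqrt lam)^k) := by
        apply mul_le_mul_of_nonneg_left main (by positivity)
    _ ≤ ((n : ℝ) ^ ((k : ℝ) / 2))⁻¹ * (16^k * (Real.sqrt a)^k) := by
        apply mul_le_mul_of_nonneg_left hpowbound (by positivity)
    _ = 16^k * T ^ ((k:ℝ)/2) * (((k:ℝ) ^ ((k:ℝ)/2))⁻¹) := by
        rw [hsqak, hsplit]
        field_simp
    _ ≤ 100^k * T ^ ((k:ℝ)/2) * (Real.Gamma ((k:ℝ)/2 + 1))⁻¹ := by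
        apply mul_le_mul ?_ hGinv (by positivity) (by positivity)
        apply mul_le_mul_of_nonneg_right ?_ hTk
        apply pow_le_pow_left₀ (by norm_num) (by norm_num) k
    _ = 100 ^ k * T ^ ((k : ℝ) / 2) / Real.Gamma ((k : ℝ) / 2 + 1) := by
        rw [div_eq_mul_inv]
        try ring

end
end

section
/- For every d ≥ 1, p ≥ 1 and q > 0 with pq > 2d there exists a constant C (depending only on d, p, q) such that for every continuous function f : ℝ^d → ℝ, every open unit ball B_1(x) ⊂ ℝ^d and all s, t ∈ B_1(x): |f(t) − f(s)| ≤ C |t − s|^{q − 2d/p} ( ∫_{B_1(x)} ∫_{B_1(x)} (|f(u) − f(v)| / |u − v|^q)^p du dv )^{1/p}. -/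
open MeasureTheory

noncomputable section

open ENNReal Metric Filter

lemma holder_one {α : Type*} [MeasurableSpace α] (μ : Measure α) {p : ℝ} (hp : 1 ≤ p)
    (g : α → ℝ≥0∞) (hg : AEMeasurable g μ) :
    ∫⁻ a, g a ∂μ ≤ (∫⁻ a, g a ^ p ∂μ) ^ (1/p) * (μ Set.univ) ^ (1 - 1/p) := by
  rcases eq_or_lt_of_le hp with h1 | h1
  · simp [← h1]
  · have hpq : p.HolderConjugate (1 - 1/p)⁻¹ := by
      have := Real.HolderConjugate.inv_one_sub_inv (a := 1/p) (by positivity) (by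
        rw [div_lt_one (by linarith)]; linarith)
      simpa [one_div, inv_inv] using this
    have := ENNReal.lintegral_mul_le_Lp_mul_Lq μ hpq hg aemeasurable_const (g := fun _ => 1)
    simpa [one_div, hpq.symm.ne_zero, ENNReal.one_rpow, lintegral_const] using this

lemma rpow_aux1 {x : ℝ} (hx : 0 < x) (n : ℕ) (p : ℝ) :
    ((x ^ n)⁻¹ : ℝ) ^ (1/p) = x ^ (-(n:ℝ)/p) := by
  rw [← Real.rpow_natCast x n, ← Real.rpow_neg hx.le, ← Real.rpow_mul hx.le]
  congr 1
  ring

lemma rpow_helper1 {l κ Ft p q : ℝ} (n : ℕ) (hl : 0 < l) (hκ : 0 < κ) (hFt : 0 ≤ Ft)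
    (hp : 0 < p) (hq : 0 < q) :
    (2*l)^q * (Ft / ((l^n*κ) * ((l/2)^n*κ)))^(1/p)
      = 2^q * ((2:ℝ)^n * Ft / κ^2)^(1/p) * l^(q - 2*n/p) := by
  have e1 : Ft / ((l^n*κ) * ((l/2)^n*κ)) = ((2:ℝ)^n * Ft / κ^2) * ((l^(2*n))⁻¹ : ℝ) := by
    rw [div_pow, pow_mul, sq]
    field_simp
    ring
  have hbase : (0:ℝ) ≤ (2:ℝ)^n * Ft / κ^2 := by positivity
  rw [e1, Real.mul_rpow hbase (by positivity), rpow_aux1 hl (2*n) p,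
    Real.mul_rpow (by norm_num) hl.le]
  rw [show ((2*n : ℕ):ℝ) = 2*(n:ℝ) by push_cast; ring]
  rw [show q - 2*(n:ℝ)/p = q + (-(2*(n:ℝ))/p) by ring, Real.rpow_add hl]
  ring_nf

lemma rpow_helper2 {r κ Ft p q : ℝ} (n : ℕ) (hr : 0 < r) (hκ : 0 < κ) (hFt : 0 ≤ Ft) :
    (2*r)^q * (Ft / (((r/8)^n*κ) * ((r/8)^n*κ)))^(1/p)
      = 2^q * ((8:ℝ)^(2*n) * Ft / κ^2)^(1/p) * r^(q - 2*n/p) := by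
  have e1 : Ft / (((r/8)^n*κ) * ((r/8)^n*κ)) = ((8:ℝ)^(2*n) * Ft / κ^2) * ((r^(2*n))⁻¹ : ℝ) := by
    rw [div_pow, pow_mul, pow_mul, sq, sq]
    field_simp
    ring_nf
    rw [show (64:ℝ) = 8^2 by norm_num, ← pow_mul]
    ring
  have hbase : (0:ℝ) ≤ (8:ℝ)^(2*n) * Ft / κ^2 := by positivity
  rw [e1, Real.mul_rpow hbase (by positivity), rpow_aux1 hr (2*n) p,
    Real.mul_rpow (by norm_num) hr.le]
  rw [show ((2*n : ℕ):ℝ) = 2*(n:ℝ) by push_cast; ring]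
  rw [show q - 2*(n:ℝ)/p = q + (-(2*(n:ℝ))/p) by ring, Real.rpow_add hr]
  ring_nf


variable {d : ℕ}

local notation "E" => EuclideanSpace ℝ (Fin d)

noncomputable def avgf (f : E → ℝ) (A : Set E) : ℝ := (volume A).toReal⁻¹ * ∫ u in A, f u

lemma avg_tendsto (f : E → ℝ) (hf : Continuous f) (s : E) {c : ℕ → E} {ρ : ℕ → ℝ}
    (hρ : ∀ k, 0 < ρ k) (hc : Tendsto c atTop (nhds s)) (hρ0 : Tendsto ρ atTop (nhds 0)) :
    Tendsto (fun k => avgf f (ball (c k) (ρ k))) atTop (nhds (f s)) := by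
  have intf : ∀ (a : E) (r : ℝ), IntegrableOn f (ball a r) volume := fun a r =>
    (hf.locallyIntegrable.integrableOn_isCompact (isCompact_closedBall a r)).mono_set
      ball_subset_closedBall
  rw [Metric.tendsto_atTop]
  intro ε hε
  obtain ⟨δ, hδ, hδf⟩ := Metric.continuousAt_iff.1 (hf.continuousAt (x := s)) (ε/2) (by linarith)
  have hev : ∀ᶠ k in atTop, dist (c k) s + ρ k < δ := by
    have h1 : Tendsto (fun k => dist (c k) s + ρ k) atTop (nhds 0) := by
      simpa using (tendsto_iff_dist_tendsto_zero.1 hc).add hρ0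
    exact (h1.eventually (eventually_lt_nhds hδ)).mono (by simp)
  obtain ⟨N, hN⟩ := eventually_atTop.1 hev
  refine ⟨N, fun n hn => ?_⟩
  set A := ball (c n) (ρ n)
  have m0 : volume A ≠ 0 := (measure_ball_pos volume _ (hρ n)).ne'
  have mt : volume A ≠ ⊤ := measure_ball_lt_top.ne
  set m := (volume A).toReal with hm
  have hm0 : 0 < m := ENNReal.toReal_pos m0 mt
  have hkey : avgf f A - f s = m⁻¹ * ∫ u in A, (f u - f s) := by
    rw [integral_sub (intf _ _) (integrableOn_const measure_ball_lt_top.ne),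
      setIntegral_const, smul_eq_mul, measureReal_def]
    unfold avgf
    rw [← hm]
    field_simp
    rfl
  have hbound : ∀ u ∈ A, ‖f u - f s‖ ≤ ε/2 := by
    intro u hu
    have : dist u s < δ := by
      calc dist u s ≤ dist u (c n) + dist (c n) s := dist_triangle _ _ _
        _ < ρ n + dist (c n) s := by gcongr; exact mem_ball.1 hu
        _ < δ := by have := hN n hn; linarith
    simpa [Real.norm_eq_abs, Real.dist_eq] using (hδf this).le
  have habs : |avgf f A - f s| ≤ ε/2 := by
    rw [hkey, abs_mul, abs_of_nonneg (inv_nonneg.2 hm0.le)]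
    have := norm_setIntegral_le_of_norm_le_const (μ := volume) (s := A)
      (measure_ball_lt_top) hbound
    rw [Real.norm_eq_abs] at this
    calc m⁻¹ * |∫ u in A, (f u - f s)| ≤ m⁻¹ * (ε/2 * m) := by
          refine mul_le_mul_of_nonneg_left ?_ (inv_nonneg.2 hm0.le)
          simpa [Measure.real, ← hm] using this
      _ = ε/2 := by field_simp
  rw [Real.dist_eq]
  calc |avgf f A - f s| ≤ ε/2 := habs
    _ < ε := by linarith

lemma grr_step {p q : ℝ} (hp : 1 ≤ p) (hq : 0 < q)
    (f : E → ℝ) (hf : Continuous f) (x : E)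
    (hF : (∫⁻ uv in (ball x 1) ×ˢ (ball x 1),
        ENNReal.ofReal ((|f uv.1 - f uv.2| / dist uv.1 uv.2 ^ q) ^ p)) ≠ ⊤)
    {a b : E} {ρ σ D : ℝ} (hρ : 0 < ρ) (hσ : 0 < σ)
    (hA : ball a ρ ⊆ ball x 1) (hB : ball b σ ⊆ ball x 1)
    (hD : ∀ u ∈ ball a ρ, ∀ v ∈ ball b σ, dist u v ≤ D) :
    |avgf f (ball a ρ) - avgf f (ball b σ)|
      ≤ D ^ q * ((∫⁻ uv in (ball x 1) ×ˢ (ball x 1),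
          ENNReal.ofReal ((|f uv.1 - f uv.2| / dist uv.1 uv.2 ^ q) ^ p)).toReal
            / ((volume (ball a ρ)).toReal * (volume (ball b σ)).toReal)) ^ (1/p) := by
  have hp0 : (0:ℝ) < p := lt_of_lt_of_le one_pos hp
  set A := ball a ρ with hAdef
  set B := ball b σ with hBdef
  set F := ∫⁻ uv in (ball x 1) ×ˢ (ball x 1),
      ENNReal.ofReal ((|f uv.1 - f uv.2| / dist uv.1 uv.2 ^ q) ^ p) with hFdef
  have mA0 : volume A ≠ 0 := (measure_ball_pos volume a hρ).ne'
  have mAt : volume A ≠ ⊤ := measure_ball_lt_top.ne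
  have mB0 : volume B ≠ 0 := (measure_ball_pos volume b hσ).ne'
  have mBt : volume B ≠ ⊤ := measure_ball_lt_top.ne
  set mA := (volume A).toReal with hmA
  set mB := (volume B).toReal with hmB
  have hmA0 : 0 < mA := ENNReal.toReal_pos mA0 mAt
  have hmB0 : 0 < mB := ENNReal.toReal_pos mB0 mBt
  have hD0 : 0 ≤ D := le_trans dist_nonneg (hD a (mem_ball_self hρ) b (mem_ball_self hσ))
  -- integrability
  have intf : ∀ (c : E) (r : ℝ), IntegrableOn f (ball c r) volume := fun c r =>
    (hf.locallyIntegrable.integrableOn_isCompact (isCompact_closedBall c r)).mono_set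
      ball_subset_closedBall
  have hcont : Continuous fun w : E × E => f w.1 - f w.2 :=
    (hf.comp continuous_fst).sub (hf.comp continuous_snd)
  have inth : IntegrableOn (fun w : E × E => f w.1 - f w.2) (A ×ˢ B) volume :=
    (hcont.locallyIntegrable.integrableOn_isCompact
      ((isCompact_closedBall a ρ).prod (isCompact_closedBall b σ))).mono_set
      (Set.prod_mono ball_subset_closedBall ball_subset_closedBall)
  -- Fubini identity
  set IA := ∫ u in A, f u with hIA
  set IB := ∫ v in B, f v with hIB
  have key : ∫ w in A ×ˢ B, (f w.1 - f w.2) = mB * IA - mA * IB := by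
    rw [Measure.volume_eq_prod]
    rw [Measure.volume_eq_prod] at inth
    rw [setIntegral_prod _ inth]
    have inner : ∀ u : E, ∫ v in B, (f u - f v) = mB * f u - IB := by
      intro u
      rw [hIB, integral_sub (integrableOn_const (C := f u) measure_ball_lt_top.ne) (intf b σ),
        setIntegral_const, smul_eq_mul, measureReal_def]
    simp_rw [inner]
    rw [integral_sub ((intf a ρ).const_mul mB) (integrableOn_const (C := IB) measure_ball_lt_top.ne),
      integral_const_mul, setIntegral_const, smul_eq_mul, measureReal_def, ← hIA]
  have habs : |avgf f A - avgf f B|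
      ≤ (mA * mB)⁻¹ * ∫ w in A ×ˢ B, |f w.1 - f w.2| := by
    have hid : avgf f A - avgf f B = (mA * mB)⁻¹ * ∫ w in A ×ˢ B, (f w.1 - f w.2) := by
      rw [key]; unfold avgf; rw [← hmA, ← hmB, ← hIA, ← hIB]; field_simp
    rw [hid, abs_mul, abs_of_nonneg (inv_nonneg.2 (mul_nonneg hmA0.le hmB0.le))]
    refine mul_le_mul_of_nonneg_left ?_ (inv_nonneg.2 (mul_nonneg hmA0.le hmB0.le))
    simpa [Real.norm_eq_abs] using
      norm_integral_le_integral_norm (μ := volume.restrict (A ×ˢ B))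
        (fun w : E × E => f w.1 - f w.2)
  -- pass to lintegral
  have heq : ∫ w in A ×ˢ B, |f w.1 - f w.2|
      = (∫⁻ w in A ×ˢ B, ENNReal.ofReal (|f w.1 - f w.2|)).toReal := by
    rw [integral_eq_lintegral_of_nonneg_ae (Filter.Eventually.of_forall fun w => abs_nonneg _)
      ((hcont.abs).aestronglyMeasurable)]
  set g : E × E → ℝ≥0∞ := fun w => ENNReal.ofReal (|f w.1 - f w.2| / dist w.1 w.2 ^ q)
    with hgdef
  have hgmeas : Measurable g := by
    apply ENNReal.measurable_ofReal.comp
    exact (hcont.abs.measurable).div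
      (((continuous_fst.dist continuous_snd).rpow_const fun _ => Or.inr hq.le).measurable)
  have l1 : ∫⁻ w in A ×ˢ B, ENNReal.ofReal (|f w.1 - f w.2|)
      ≤ ENNReal.ofReal (D ^ q) * ∫⁻ w in A ×ˢ B, g w := by
    rw [← lintegral_const_mul _ hgmeas]
    refine setLIntegral_mono (measurable_const.mul hgmeas) ?_
    rintro ⟨u, v⟩ ⟨hu, hv⟩
    rw [hgdef]
    rw [← ENNReal.ofReal_mul (by positivity)]
    apply ENNReal.ofReal_le_ofReal
    rcases eq_or_lt_of_le (dist_nonneg (x := u) (y := v)) with h0 | h0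
    · have huv : u = v := dist_eq_zero.mp h0.symm
      simp [huv]
    · have hdq : dist u v ^ q ≤ D ^ q := Real.rpow_le_rpow h0.le (hD u hu v hv) hq.le
      have hpos : (0:ℝ) < dist u v ^ q := Real.rpow_pos_of_pos h0 q
      calc |f u - f v| = |f u - f v| / dist u v ^ q * (dist u v ^ q) := by field_simp
        _ ≤ |f u - f v| / dist u v ^ q * (D ^ q) := by gcongr
        _ = D ^ q * (|f u - f v| / dist u v ^ q) := by ring
  have l2 : ∫⁻ w in A ×ˢ B, g w ≤ F ^ (1/p) * (volume A * volume B) ^ (1 - 1/p) := by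
    have h := holder_one (volume.restrict (A ×ˢ B)) hp g hgmeas.aemeasurable
    rw [Measure.restrict_apply_univ] at h
    have hvol : volume (A ×ˢ B) = volume A * volume B := by
      rw [Measure.volume_eq_prod, Measure.prod_prod]
    rw [hvol] at h
    refine h.trans (mul_le_mul_left (ENNReal.rpow_le_rpow ?_ (by positivity)) _)
    calc ∫⁻ w in A ×ˢ B, g w ^ p
        ≤ ∫⁻ w in (ball x 1) ×ˢ (ball x 1), g w ^ p :=
          lintegral_mono_set (Set.prod_mono hA hB)
      _ = F := by
          rw [hFdef]
          refine lintegral_congr fun w => ?_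
          rw [hgdef, ← ENNReal.ofReal_rpow_of_nonneg (by positivity) hp0.le]
  -- bound RHS is finite
  have hfin : ENNReal.ofReal (D ^ q) * (F ^ (1/p) * (volume A * volume B) ^ (1 - 1/p)) ≠ ⊤ := by
    apply ENNReal.mul_ne_top ENNReal.ofReal_ne_top
    apply ENNReal.mul_ne_top
    · exact ENNReal.rpow_ne_top_of_nonneg (by positivity) hF
    · refine ENNReal.rpow_ne_top_of_nonneg ?_ (ENNReal.mul_ne_top mAt mBt)
      rw [sub_nonneg, div_le_one hp0]; exact hp
  have l3 : (∫⁻ w in A ×ˢ B, ENNReal.ofReal (|f w.1 - f w.2|)).toReal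
      ≤ D ^ q * (F.toReal ^ (1/p) * (mA * mB) ^ (1 - (1:ℝ)/p)) := by
    have := ENNReal.toReal_mono hfin (le_trans l1 (mul_le_mul_right l2 _))
    refine this.trans (le_of_eq ?_)
    rw [ENNReal.toReal_mul, ENNReal.toReal_mul, ENNReal.toReal_ofReal (by positivity),
      ← ENNReal.toReal_rpow, ← ENNReal.toReal_rpow, ENNReal.toReal_mul]
  -- combine
  calc |avgf f A - avgf f B|
      ≤ (mA * mB)⁻¹ * (D ^ q * (F.toReal ^ (1/p) * (mA * mB) ^ (1 - (1:ℝ)/p))) := by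
        refine habs.trans ?_
        rw [heq]
        exact mul_le_mul_of_nonneg_left l3 (inv_nonneg.2 (mul_nonneg hmA0.le hmB0.le))
    _ = D ^ q * (F.toReal / (mA * mB)) ^ (1/p) := by
        have hm : (0:ℝ) < mA * mB := by positivity
        have hFt : (0:ℝ) ≤ F.toReal := ENNReal.toReal_nonneg
        rw [Real.div_rpow hFt hm.le, Real.rpow_sub hm, Real.rpow_one]
        have h1 : (mA * mB) ^ ((1:ℝ)/p) ≠ 0 := (Real.rpow_pos_of_pos hm _).ne'
        field_simp

open Filter in
lemma grr_chain (hd : 1 ≤ d) {p q : ℝ} (hp : 1 ≤ p) (hq : 0 < q)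
    (hα : 0 < q - 2*(d:ℝ)/p)
    (f : E → ℝ) (hf : Continuous f) (x : E)
    (hF : (∫⁻ uv in (ball x 1) ×ˢ (ball x 1),
        ENNReal.ofReal ((|f uv.1 - f uv.2| / dist uv.1 uv.2 ^ q) ^ p)) ≠ ⊤)
    {s : E} (hs : s ∈ ball x 1) {ε : ℝ} (hε0 : 0 < ε) (hε1 : ε ≤ 1) :
    |f s - avgf f (ball (s + ε • (x - s)) ε)|
      ≤ 2^q * ((2:ℝ)^d * (∫⁻ uv in (ball x 1) ×ˢ (ball x 1),
            ENNReal.ofReal ((|f uv.1 - f uv.2| / dist uv.1 uv.2 ^ q) ^ p)).toReal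
          / ((volume (ball (0:E) 1)).toReal)^2)^(1/p)
        * ε ^ (q - 2*(d:ℝ)/p) * (1 - (1/2:ℝ)^(q - 2*(d:ℝ)/p))⁻¹ := by
  have hp0 : (0:ℝ) < p := lt_of_lt_of_le one_pos hp
  haveI : Nonempty (Fin d) := ⟨⟨0, hd⟩⟩
  set κ := (volume (ball (0:E) 1)).toReal with hκ
  have hκ0 : 0 < κ := ENNReal.toReal_pos (measure_ball_pos volume _ one_pos).ne'
    measure_ball_lt_top.ne
  set Ft := (∫⁻ uv in (ball x 1) ×ˢ (ball x 1),
      ENNReal.ofReal ((|f uv.1 - f uv.2| / dist uv.1 uv.2 ^ q) ^ p)).toReal with hFtdef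
  have hFt : 0 ≤ Ft := ENNReal.toReal_nonneg
  set α := q - 2*(d:ℝ)/p with hαdef
  set K := 2^q * ((2:ℝ)^d * Ft / κ^2)^(1/p) with hK
  have hK0 : 0 ≤ K := by positivity
  -- volume of balls
  have hvol : ∀ (c : E) {r : ℝ}, 0 < r → (volume (ball c r)).toReal = r^d * κ := by
    intro c r hr
    rw [Measure.addHaar_ball volume c hr.le, ENNReal.toReal_mul,
      ENNReal.toReal_ofReal (by positivity), finrank_euclideanSpace_fin]
  -- the chain of balls
  set lam : ℕ → ℝ := fun k => ε * (1/2)^k with hlam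
  set c : ℕ → E := fun k => s + (lam k) • (x - s) with hc
  have hlam0 : ∀ k, 0 < lam k := fun k => by rw [hlam]; positivity
  have hlam1 : ∀ k, lam k ≤ 1 := fun k => by
    rw [hlam]
    calc ε * (1/2:ℝ)^k ≤ ε * 1 := by
          refine mul_le_mul_of_nonneg_left (pow_le_one₀ (by norm_num) (by norm_num)) hε0.le
      _ ≤ 1 := by linarith
  have hlam_half : ∀ k, lam (k+1) = lam k / 2 := fun k => by
    rw [hlam]; simp [pow_succ]; ring
  have hdistc : ∀ k, dist (c k) x = (1 - lam k) * dist s x := by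
    intro k
    have hck : c k - x = (1 - lam k) • (s - x) := by rw [hc]; module
    rw [dist_eq_norm, hck, norm_smul, Real.norm_eq_abs,
      abs_of_nonneg (by linarith [hlam1 k]), dist_eq_norm]
  have hsub : ∀ k, ball (c k) (lam k) ⊆ ball x 1 := by
    intro k y hy
    rw [mem_ball]
    calc dist y x ≤ dist y (c k) + dist (c k) x := dist_triangle _ _ _
      _ < lam k + (1 - lam k) * dist s x := by
          rw [hdistc]; exact add_lt_add_of_lt_of_le (mem_ball.1 hy) le_rfl
      _ ≤ lam k + (1 - lam k) * 1 := by
          refine add_le_add_right (mul_le_mul_of_nonneg_left (mem_ball.1 hs).le ?_) _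
          linarith [hlam1 k]
      _ = 1 := by ring
  have hD : ∀ k, ∀ u ∈ ball (c k) (lam k), ∀ v ∈ ball (c (k+1)) (lam (k+1)),
      dist u v ≤ 2 * lam k := by
    intro k u hu v hv
    have hcc : dist (c k) (c (k+1)) ≤ lam k / 2 := by
      have hck : c k - c (k+1) = (lam k - lam (k+1)) • (x - s) := by rw [hc]; module
      rw [dist_eq_norm, hck, norm_smul, Real.norm_eq_abs, hlam_half,
        abs_of_nonneg (by linarith [hlam0 k])]
      have hxs : ‖x - s‖ ≤ 1 := by
        rw [← dist_eq_norm, dist_comm]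
        exact (mem_ball.1 hs).le
      calc (lam k - lam k / 2) * ‖x - s‖ ≤ (lam k - lam k/2) * 1 := by
            refine mul_le_mul_of_nonneg_left hxs ?_
            linarith [hlam0 k]
        _ = lam k / 2 := by ring
    calc dist u v ≤ dist u (c k) + dist (c k) (c (k+1)) + dist (c (k+1)) v :=
          dist_triangle4 _ _ _ _
      _ ≤ lam k + lam k / 2 + lam (k+1) := by
          refine add_le_add (add_le_add (mem_ball.1 hu).le hcc) ?_
          rw [dist_comm]; exact (mem_ball.1 hv).le
      _ ≤ 2 * lam k := by rw [hlam_half]; linarith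
  -- step bounds
  have hstep : ∀ k, |avgf f (ball (c k) (lam k)) - avgf f (ball (c (k+1)) (lam (k+1)))|
      ≤ K * ε^α * ((1/2:ℝ)^α)^k := by
    intro k
    rw [hlam_half]
    have h := grr_step hp hq f hf x hF (hlam0 k) (hlam0 (k+1)) (hsub k) (hsub (k+1)) (hD k)
    rw [hvol _ (hlam0 k), hvol _ (hlam0 (k+1)), hlam_half,
      rpow_helper1 d (hlam0 k) hκ0 hFt hp0 hq] at h
    refine h.trans (le_of_eq ?_)
    have hlamα : (lam k)^α = ε^α * ((1/2:ℝ)^α)^k := by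
      rw [hlam]
      rw [Real.mul_rpow hε0.le (by positivity), ← Real.rpow_natCast ((1/2):ℝ) k,
        ← Real.rpow_mul (by norm_num), mul_comm ((k:ℝ)) α, Real.rpow_mul (by norm_num),
        Real.rpow_natCast]
    rw [hlamα, hK, hαdef]
    ring
  -- geometric sum
  have hhalf : (0:ℝ) ≤ (1/2:ℝ)^α := by positivity
  have hlt1 : ((1/2:ℝ))^α < 1 := Real.rpow_lt_one (by norm_num) (by norm_num) hα
  have htel : ∀ N, |avgf f (ball (c 0) (lam 0)) - avgf f (ball (c N) (lam N))|
      ≤ K * ε^α * (1 - (1/2:ℝ)^α)⁻¹ := by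
    intro N
    have h1 := dist_le_range_sum_dist (fun k => avgf f (ball (c k) (lam k))) N
    rw [Real.dist_eq] at h1
    refine h1.trans ?_
    have h2 : ∑ i ∈ Finset.range N, dist (avgf f (ball (c i) (lam i)))
        (avgf f (ball (c (i+1)) (lam (i+1))))
        ≤ ∑ i ∈ Finset.range N, K * ε^α * ((1/2:ℝ)^α)^i := by
      refine Finset.sum_le_sum fun i _ => ?_
      rw [Real.dist_eq]; exact hstep i
    refine h2.trans ?_
    rw [← Finset.mul_sum]
    refine mul_le_mul_of_nonneg_left ?_ (by positivity)
    exact sum_le_hasSum (Finset.range N) (fun i _ => by positivity)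
      (hasSum_geometric_of_lt_one hhalf hlt1)
  -- limit
  have hlam_tendsto : Tendsto lam atTop (nhds 0) := by
    rw [hlam]
    simpa using (tendsto_pow_atTop_nhds_zero_of_lt_one (by norm_num : (0:ℝ) ≤ 1/2)
      (by norm_num)).const_mul ε
  have hc_tendsto : Tendsto c atTop (nhds s) := by
    rw [hc]
    have : Tendsto (fun k => (lam k) • (x - s)) atTop (nhds ((0:ℝ) • (x - s))) :=
      hlam_tendsto.smul_const _
    simpa using tendsto_const_nhds.add this
  have hlim : Tendsto (fun k => avgf f (ball (c k) (lam k))) atTop (nhds (f s)) :=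
    avg_tendsto f hf s hlam0 hc_tendsto hlam_tendsto
  have hfinal : |f s - avgf f (ball (c 0) (lam 0))| ≤ K * ε^α * (1 - (1/2:ℝ)^α)⁻¹ := by
    have hT : Tendsto (fun N => dist (avgf f (ball (c 0) (lam 0)))
        (avgf f (ball (c N) (lam N)))) atTop
        (nhds (dist (avgf f (ball (c 0) (lam 0))) (f s))) :=
      tendsto_const_nhds.dist hlim
    have := le_of_tendsto hT (Filter.Eventually.of_forall fun N => by
      rw [Real.dist_eq]; exact htel N)
    rwa [Real.dist_eq, abs_sub_comm] at this
  have hc0 : c 0 = s + ε • (x - s) := by rw [hc]; simp [hlam]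
  have hl0 : lam 0 = ε := by rw [hlam]; simp
  rw [hc0, hl0] at hfinal
  refine hfinal.trans (le_of_eq ?_)
  rw [hK, hαdef]

lemma ball_shift_subset {s x : E} (hs : s ∈ ball x 1) {ε : ℝ} (hε0 : 0 < ε) (hε1 : ε ≤ 1) :
    ball (s + ε • (x - s)) ε ⊆ ball x 1 := by
  intro y hy
  have hck : s + ε • (x - s) - x = (1 - ε) • (s - x) := by module
  have hdc : dist (s + ε • (x - s)) x = (1 - ε) * dist s x := by
    rw [dist_eq_norm, hck, norm_smul, Real.norm_eq_abs, abs_of_nonneg (by linarith),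
      dist_eq_norm]
  rw [mem_ball]
  calc dist y x ≤ dist y (s + ε • (x - s)) + dist (s + ε • (x - s)) x := dist_triangle _ _ _
    _ < ε + (1 - ε) * dist s x := by
        rw [hdc]; exact add_lt_add_of_lt_of_le (mem_ball.1 hy) le_rfl
    _ ≤ ε + (1 - ε) * 1 := by
        refine add_le_add_right (mul_le_mul_of_nonneg_left (mem_ball.1 hs).le ?_) _
        linarith
    _ = 1 := by ring


/-- Garsia–Rodemich–Rumsey with polynomial `Ψ` and `φ`: for `p ≥ 1`, `q > 0`
with `pq > 2d` there is a constant `C` such that for every continuous `f : ℝ^d → ℝ` and all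
`s, t` in a unit ball `B₁(x)`:
`|f(t) − f(s)| ≤ C |t−s|^{q−2d/p} (∫∫_{B×B} (|f(u)−f(v)|/|u−v|^q)^p)^{1/p}`. -/
theorem garsia_rodemich_rumsey_polynomial
    (d : ℕ) (hd : 1 ≤ d) (p q : ℝ) (hp : 1 ≤ p) (hq : 0 < q) (hpq : 2 * d < p * q) :
    ∃ C : ℝ, 0 < C ∧
      ∀ f : EuclideanSpace ℝ (Fin d) → ℝ, Continuous f →
      ∀ x s t : EuclideanSpace ℝ (Fin d), s ∈ Metric.ball x 1 → t ∈ Metric.ball x 1 →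
        ENNReal.ofReal (|f t - f s|)
          ≤ ENNReal.ofReal (C * dist t s ^ (q - 2 * d / p)) *
            (∫⁻ uv in (Metric.ball x 1) ×ˢ (Metric.ball x 1),
                ENNReal.ofReal ((|f uv.1 - f uv.2| / dist uv.1 uv.2 ^ q) ^ p)) ^ (1 / p) := by
  have hp0 : (0:ℝ) < p := lt_of_lt_of_le one_pos hp
  have hα : 0 < q - 2 * (d:ℝ) / p := by
    rw [sub_pos, div_lt_iff₀ hp0]
    calc 2 * (d:ℝ) < p * q := hpq
      _ = q * p := mul_comm _ _
  set α := q - 2 * (d:ℝ) / p with hαdef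
  haveI : Nonempty (Fin d) := ⟨⟨0, hd⟩⟩
  set κ := (volume (ball (0:EuclideanSpace ℝ (Fin d)) 1)).toReal with hκ
  have hκ0 : 0 < κ := ENNReal.toReal_pos (measure_ball_pos volume _ one_pos).ne'
    measure_ball_lt_top.ne
  have hlt1 : ((1/2:ℝ))^α < 1 := Real.rpow_lt_one (by norm_num) (by norm_num) hα
  have hgeom : 0 < (1 - (1/2:ℝ)^α)⁻¹ := by
    rw [inv_pos, sub_pos]; exact hlt1
  set C : ℝ := 2^q * (2 * ((2:ℝ)^d/κ^2)^(1/p) * (1-(1/2:ℝ)^α)⁻¹ + ((8:ℝ)^(2*d)/κ^2)^(1/p))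
    with hC
  have hC0 : 0 < C := by
    rw [hC]
    have h1 : (0:ℝ) < ((2:ℝ)^d/κ^2)^(1/p) := Real.rpow_pos_of_pos (by positivity) _
    have h2 : (0:ℝ) < ((8:ℝ)^(2*d)/κ^2)^(1/p) := Real.rpow_pos_of_pos (by positivity) _
    positivity
  refine ⟨C, hC0, ?_⟩
  intro f hf x s t hs ht
  set F := ∫⁻ uv in (ball x 1) ×ˢ (ball x 1),
      ENNReal.ofReal ((|f uv.1 - f uv.2| / dist uv.1 uv.2 ^ q) ^ p) with hFdef
  rcases eq_or_ne s t with rfl | hst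
  · simp
  have hr0 : 0 < dist t s := dist_pos.2 (Ne.symm hst)
  set r := dist t s with hrdef
  have hr2 : r < 2 := by
    calc r ≤ dist t x + dist x s := dist_triangle _ _ _
      _ < 1 + 1 := by
          refine add_lt_add (mem_ball.1 ht) ?_
          rw [dist_comm]; exact mem_ball.1 hs
      _ = 2 := by norm_num
  have hrα : 0 < r ^ α := Real.rpow_pos_of_pos hr0 _
  rcases eq_or_ne F ⊤ with hF | hF
  · rw [hF]
    have h1 : ENNReal.ofReal (C * r ^ α) ≠ 0 := by
      rw [Ne, ENNReal.ofReal_eq_zero, not_le]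
      positivity
    rw [ENNReal.top_rpow_of_pos (by positivity), ENNReal.mul_top h1]
    exact le_top
  -- main case
  set Ft := F.toReal with hFtdef
  have hFt : 0 ≤ Ft := ENNReal.toReal_nonneg
  set ε := r / 8 with hε
  have hε0 : 0 < ε := by positivity
  have hε1 : ε ≤ 1 := by rw [hε]; linarith
  -- chain bounds at s and t
  have hchain_s := grr_chain hd hp hq hα f hf x hF hs hε0 hε1
  have hchain_t := grr_chain hd hp hq hα f hf x hF ht hε0 hε1
  rw [← hFdef, ← hFtdef, ← hκ, ← hαdef] at hchain_s hchain_t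
  -- bridge
  have hvol : ∀ (c : EuclideanSpace ℝ (Fin d)) {ρ : ℝ}, 0 < ρ →
      (volume (ball c ρ)).toReal = ρ^d * κ := by
    intro c ρ hρ
    rw [Measure.addHaar_ball volume c hρ.le, ENNReal.toReal_mul,
      ENNReal.toReal_ofReal (by positivity), finrank_euclideanSpace_fin]
  have hDb : ∀ u ∈ ball (s + ε • (x - s)) ε, ∀ v ∈ ball (t + ε • (x - t)) ε,
      dist u v ≤ 2 * r := by
    intro u hu v hv
    have hab : dist (s + ε • (x - s)) (t + ε • (x - t)) = (1 - ε) * r := by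
      have h1 : s + ε • (x - s) - (t + ε • (x - t)) = (1 - ε) • (s - t) := by module
      rw [dist_eq_norm, h1, norm_smul, Real.norm_eq_abs, abs_of_nonneg (by linarith)]
      rw [hrdef, dist_eq_norm, ← norm_neg]
      congr 1
      abel
    calc dist u v ≤ dist u (s + ε • (x - s)) + dist (s + ε • (x - s)) (t + ε • (x - t))
          + dist (t + ε • (x - t)) v := dist_triangle4 _ _ _ _
      _ ≤ ε + (1 - ε) * r + ε := by
          refine add_le_add (add_le_add (mem_ball.1 hu).le hab.le) ?_
          rw [dist_comm]; exact (mem_ball.1 hv).le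
      _ ≤ 2 * r := by
          have : (1 - ε) * r ≤ r := by nlinarith
          rw [hε] at *
          linarith
  have hbridge := grr_step hp hq f hf x hF hε0 hε0
    (ball_shift_subset hs hε0 hε1) (ball_shift_subset ht hε0 hε1) hDb
  rw [hvol _ hε0, hvol _ hε0, ← hFtdef, hε, rpow_helper2 d hr0 hκ0 hFt, ← hε] at hbridge
  set a := avgf f (ball (s + ε • (x - s)) ε) with ha
  set b := avgf f (ball (t + ε • (x - t)) ε) with hb
  set Ftp := Ft ^ (1/p) with hFtp
  have hFtp0 : 0 ≤ Ftp := Real.rpow_nonneg hFt _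
  have hsplit1 : (2:ℝ)^d * Ft / κ^2 = (2^d/κ^2) * Ft := by ring
  have hsplit2 : (8:ℝ)^(2*d) * Ft / κ^2 = (8^(2*d)/κ^2) * Ft := by ring
  rw [hsplit1, Real.mul_rpow (by positivity) hFt, ← hFtp] at hchain_s hchain_t
  rw [hsplit2, Real.mul_rpow (by positivity) hFt, ← hFtp] at hbridge
  set K1 := ((2:ℝ)^d/κ^2) ^ (1/p) with hK1
  set K2 := ((8:ℝ)^(2*d)/κ^2) ^ (1/p) with hK2
  have hK10 : 0 ≤ K1 := Real.rpow_nonneg (by positivity) _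
  have hK20 : 0 ≤ K2 := Real.rpow_nonneg (by positivity) _
  set G := (1 - (1/2:ℝ)^α)⁻¹ with hG
  have hεα : ε ^ α ≤ r ^ α := Real.rpow_le_rpow hε0.le (by rw [hε]; linarith) hα.le
  have hq2 : (0:ℝ) ≤ (2:ℝ)^q := Real.rpow_nonneg (by norm_num) _
  have hb1 : |f s - a| ≤ 2^q * (K1 * Ftp) * r^α * G := by
    refine hchain_s.trans ?_
    have h0 : (0:ℝ) ≤ 2^q * (K1 * Ftp) := by positivity
    have := mul_le_mul_of_nonneg_left hεα h0
    exact mul_le_mul_of_nonneg_right this hgeom.le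
  have hb2 : |f t - b| ≤ 2^q * (K1 * Ftp) * r^α * G := by
    refine hchain_t.trans ?_
    have h0 : (0:ℝ) ≤ 2^q * (K1 * Ftp) := by positivity
    have := mul_le_mul_of_nonneg_left hεα h0
    exact mul_le_mul_of_nonneg_right this hgeom.le
  have h3 : |f t - f s| ≤ |f t - b| + |a - b| + |f s - a| := by
    have e : f t - f s = ((f t - b) + -(a - b)) + -(f s - a) := by ring
    calc |f t - f s| = |((f t - b) + -(a - b)) + -(f s - a)| := by rw [← e]
      _ ≤ |(f t - b) + -(a - b)| + |-(f s - a)| := abs_add_le _ _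
      _ ≤ (|f t - b| + |-(a - b)|) + |-(f s - a)| := by
          exact add_le_add_left (abs_add_le _ _) _
      _ = |f t - b| + |a - b| + |f s - a| := by rw [abs_neg, abs_neg]
  have htotal : |f t - f s| ≤ C * r ^ α * Ftp := by
    have : C * r ^ α * Ftp
        = (2^q * (K1 * Ftp) * r^α * G) + (2^q * (K2 * Ftp) * r^α)
          + (2^q * (K1 * Ftp) * r^α * G) := by
      rw [hC]; ring
    rw [this]
    have hbr : |a - b| ≤ 2^q * (K2 * Ftp) * r^α := by
      refine hbridge.trans (le_of_eq ?_); ring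
    linarith [h3, hb1, hb2, hbr]
  -- conclude in ℝ≥0∞
  have hofreal : ENNReal.ofReal (C * r ^ α * Ftp) = ENNReal.ofReal (C * r ^ α) * F ^ (1/p) := by
    rw [ENNReal.ofReal_mul (by positivity), hFtp,
      ← ENNReal.ofReal_rpow_of_nonneg hFt (by positivity), hFtdef, ENNReal.ofReal_toReal hF]
  calc ENNReal.ofReal |f t - f s| ≤ ENNReal.ofReal (C * r ^ α * Ftp) :=
        ENNReal.ofReal_le_ofReal htotal
    _ = ENNReal.ofReal (C * r ^ α) * F ^ (1/p) := hofreal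

end
end
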